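/- arXiv:1006.0149 — 4 statements merged into one kernel-verified Lean document; each statement's English description precedes it below -/
import Mathlib

section
/- Let n ≥ 1, T > 0, and let q : ℝⁿ → ℝ be bounded and continuous. Let v, F : ℝ × ℝⁿ → ℂ be continuously differentiable, with v(t,·) twice continuously differentiable in x for each t, and suppose there is a compact set K ⊂ ℝⁿ such that v(t,·) and F(t,·) vanish outside K for every t ∈ [0,T]. If i ∂ₜv + Δv + q v = F on [0,T] × ℝⁿ and v(0,·) = 0, then for every t ∈ [0,T], ‖v(t,·)‖_{L²} ≤ ∫₀ᵗ ‖F(s,·)‖_{L²} ds. -/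
open MeasureTheory Complex

noncomputable section

/-- Partial derivative in the `j`-th coordinate direction of a complex-valued
function on `ℝⁿ`. -/
def pd {n : ℕ} (j : Fin n) (f : EuclideanSpace ℝ (Fin n) → ℂ)
    (x : EuclideanSpace ℝ (Fin n)) : ℂ :=
  fderiv ℝ f x (EuclideanSpace.single j 1)

/-- Euclidean Laplacian `Σⱼ ∂²/∂xⱼ²` of a complex-valued function on `ℝⁿ`. -/
def lapC {n : ℕ} (f : EuclideanSpace ℝ (Fin n) → ℂ)
    (x : EuclideanSpace ℝ (Fin n)) : ℂ :=
  ∑ j, pd j (pd j f) x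

/-- `L²`-norm of a complex-valued function on `ℝⁿ`:
`‖f‖_{L²} = (∫ |f(x)|² dx)^{1/2}`. -/
def L2norm {n : ℕ} (f : EuclideanSpace ℝ (Fin n) → ℂ) : ℝ :=
  (∫ x, ‖f x‖ ^ 2) ^ (1/2 : ℝ)

section helpers


lemma gronwall_aux {T : ℝ} (hT : 0 < T) {E f D : ℝ → ℝ}
    (hEc : ContinuousOn E (Set.Icc 0 T)) (hE0 : E 0 = 0)
    (hEnn : ∀ t, 0 ≤ E t)
    (hfc : Continuous f) (hfnn : ∀ t, 0 ≤ f t)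
    (hd : ∀ t ∈ Set.Ioo 0 T, HasDerivAt E (D t) t)
    (hDle : ∀ t ∈ Set.Ioo 0 T, D t ≤ 2 * f t * Real.sqrt (E t)) :
    ∀ t ∈ Set.Icc 0 T, Real.sqrt (E t) ≤ ∫ s in (0:ℝ)..t, f s := by
  intro t ht
  refine le_of_forall_pos_le_add (fun ε hε => ?_)
  set P : ℝ → ℝ := fun s => ∫ u in (0:ℝ)..s, f u with hP
  have hPd : ∀ s : ℝ, HasDerivAt P (f s) s := fun s =>
    intervalIntegral.integral_hasDerivAt_right (hfc.intervalIntegrable _ _)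
      (hfc.stronglyMeasurableAtFilter _ _) hfc.continuousAt
  set ψ : ℝ → ℝ := fun s => Real.sqrt (E s + ε ^ 2) - P s with hψ
  have hψd : ∀ s ∈ Set.Ioo 0 T,
      HasDerivAt ψ (D s / (2 * Real.sqrt (E s + ε ^ 2)) - f s) s := by
    intro s hs
    have h1 : HasDerivAt (fun u => E u + ε ^ 2) (D s) s := (hd s hs).add_const _
    have hpos : 0 < E s + ε ^ 2 := by have := hEnn s; positivity
    have h2 := (Real.hasDerivAt_sqrt hpos.ne').comp s h1
    have : (1 / (2 * Real.sqrt (E s + ε ^ 2))) * D s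
        = D s / (2 * Real.sqrt (E s + ε ^ 2)) := by ring
    rw [this] at h2
    exact h2.sub (hPd s)
  have hψ'le : ∀ s ∈ Set.Ioo 0 T, D s / (2 * Real.sqrt (E s + ε ^ 2)) - f s ≤ 0 := by
    intro s hs
    have hpos : 0 < Real.sqrt (E s + ε ^ 2) := Real.sqrt_pos.2 (by have := hEnn s; positivity)
    have hle : D s ≤ 2 * f s * Real.sqrt (E s + ε ^ 2) := by
      refine (hDle s hs).trans ?_
      have := Real.sqrt_le_sqrt (by nlinarith [sq_nonneg ε] : E s ≤ E s + ε ^ 2)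
      nlinarith [hfnn s]
    rw [sub_nonpos, div_le_iff₀ (by positivity)]
    nlinarith
  have hψc : ContinuousOn ψ (Set.Icc 0 T) := by
    apply ContinuousOn.sub
    · exact Real.continuous_sqrt.comp_continuousOn (hEc.add continuousOn_const)
    · exact (fun s _ => ((hPd s).continuousAt).continuousWithinAt)
  have hanti : AntitoneOn ψ (Set.Icc 0 T) := by
    apply antitoneOn_of_deriv_nonpos (convex_Icc 0 T) hψc
    · intro s hs
      rw [interior_Icc] at hs
      exact ((hψd s hs).differentiableAt).differentiableWithinAt
    · intro s hs
      rw [interior_Icc] at hs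
      rw [(hψd s hs).deriv]
      exact hψ'le s hs
  have h0 : (0:ℝ) ∈ Set.Icc 0 T := ⟨le_rfl, hT.le⟩
  have := hanti h0 ht ht.1
  simp only [hψ, hP, hE0, zero_add, intervalIntegral.integral_same, sub_zero] at this
  have hsq : Real.sqrt (ε ^ 2) = ε := by
    rw [Real.sqrt_sq hε.le]
  rw [hsq] at this
  have h1 : Real.sqrt (E t) ≤ Real.sqrt (E t + ε ^ 2) :=
    Real.sqrt_le_sqrt (by nlinarith [sq_nonneg ε])
  linarith



lemma cs_integral {α : Type*} [MeasurableSpace α] {μ : Measure α} {g h : α → ℝ}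
    (hgnn : ∀ x, 0 ≤ g x) (hhnn : ∀ x, 0 ≤ h x)
    (hg2 : Integrable (fun x => g x ^ 2) μ) (hh2 : Integrable (fun x => h x ^ 2) μ)
    (hgh : Integrable (fun x => g x * h x) μ) :
    ∫ x, g x * h x ∂μ ≤ Real.sqrt (∫ x, g x ^ 2 ∂μ) * Real.sqrt (∫ x, h x ^ 2 ∂μ) := by
  set A := ∫ x, g x ^ 2 ∂μ with hA
  set B := ∫ x, h x ^ 2 ∂μ with hB
  have hAnn : 0 ≤ A := integral_nonneg (fun x => sq_nonneg _)
  have hBnn : 0 ≤ B := integral_nonneg (fun x => sq_nonneg _)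
  rcases eq_or_lt_of_le hAnn with hA0 | hApos
  · have : (fun x => g x ^ 2) =ᵐ[μ] 0 :=
      (integral_eq_zero_iff_of_nonneg (fun x => sq_nonneg _) hg2).1 hA0.symm
    have hz : (fun x => g x * h x) =ᵐ[μ] 0 := by
      filter_upwards [this] with x hx
      have : g x = 0 := by
        have : g x ^ 2 = 0 := hx
        nlinarith [hgnn x]
      simp [this]
    rw [integral_congr_ae hz]
    simp
    positivity
  rcases eq_or_lt_of_le hBnn with hB0 | hBpos
  · have : (fun x => h x ^ 2) =ᵐ[μ] 0 :=
      (integral_eq_zero_iff_of_nonneg (fun x => sq_nonneg _) hh2).1 hB0.symm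
    have hz : (fun x => g x * h x) =ᵐ[μ] 0 := by
      filter_upwards [this] with x hx
      have : h x = 0 := by
        have : h x ^ 2 = 0 := hx
        nlinarith [hhnn x]
      simp [this]
    rw [integral_congr_ae hz]
    simp
    positivity
  · set c := Real.sqrt B / Real.sqrt A with hc
    have hsA : 0 < Real.sqrt A := Real.sqrt_pos.2 hApos
    have hsB : 0 < Real.sqrt B := Real.sqrt_pos.2 hBpos
    have hcpos : 0 < c := div_pos hsB hsA
    have hpt : ∀ x, g x * h x ≤ (c / 2) * g x ^ 2 + (1 / (2 * c)) * h x ^ 2 := by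
      intro x
      have h1 : 0 ≤ (c * g x - h x) ^ 2 := sq_nonneg _
      have key : (c / 2) * g x ^ 2 + (1 / (2 * c)) * h x ^ 2 - g x * h x
          = (c * g x - h x) ^ 2 / (2 * c) := by
        field_simp
        ring
      linarith [div_nonneg (sq_nonneg (c * g x - h x)) (by positivity : (0:ℝ) ≤ 2 * c)]
    have hmono := integral_mono hgh ((hg2.const_mul (c / 2)).add (hh2.const_mul (1 / (2 * c)))) hpt
    have heq : ∫ x, ((c / 2) * g x ^ 2 + (1 / (2 * c)) * h x ^ 2) ∂μ
        = (c / 2) * A + (1 / (2 * c)) * B := by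
      rw [integral_add (hg2.const_mul _) (hh2.const_mul _), integral_const_mul, integral_const_mul]
    simp only [Pi.add_apply] at hmono
    rw [heq] at hmono
    refine hmono.trans (le_of_eq ?_)
    have hAs : Real.sqrt A * Real.sqrt A = A := Real.mul_self_sqrt hAnn
    have hBs : Real.sqrt B * Real.sqrt B = B := Real.mul_self_sqrt hBnn
    rw [← hAs, ← hBs, hc]
    field_simp
    rw [Real.sqrt_sq hsA.le, Real.sqrt_sq hsB.le]
    nlinarith [hAs, hBs]


variable {n : ℕ} {K : Set (EuclideanSpace ℝ (Fin n))}


lemma pd_zero_off (hK : IsCompact K) {f : EuclideanSpace ℝ (Fin n) → ℂ}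
    (h0 : ∀ x ∉ K, f x = 0) {x : EuclideanSpace ℝ (Fin n)} (hx : x ∉ K) (j : Fin n) :
    pd j f x = 0 := by
  have hev : f =ᶠ[nhds x] (fun _ => 0) :=
    Filter.eventually_of_mem (hK.isClosed.isOpen_compl.mem_nhds hx) (fun y hy => h0 y hy)
  unfold pd
  rw [Filter.EventuallyEq.fderiv_eq hev]
  simp

lemma contDiff_pd {f : EuclideanSpace ℝ (Fin n) → ℂ} {m : ℕ} (hf : ContDiff ℝ (m + 1) f)
    (j : Fin n) : ContDiff ℝ m (pd j f) := by
  have h1 : ContDiff ℝ m (fderiv ℝ f) := hf.fderiv_right (by norm_num)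
  exact h1.clm_apply contDiff_const

lemma continuous_pd {f : EuclideanSpace ℝ (Fin n) → ℂ} (hf : ContDiff ℝ 1 f) (j : Fin n) :
    Continuous (pd j f) := by
  have : ContDiff ℝ (0 + 1 : ℕ) f := by exact_mod_cast hf
  exact (contDiff_pd this j).continuous

lemma integrable_off_supp {E : Type*} [NormedAddCommGroup E] {f : EuclideanSpace ℝ (Fin n) → E}
    (hc : Continuous f) (hK : IsCompact K) (h0 : ∀ x ∉ K, f x = 0) : Integrable f :=
  hc.integrable_of_hasCompactSupport (HasCompactSupport.intro hK h0)

lemma im_integral_conj_mul_lap (hK : IsCompact K) {f : EuclideanSpace ℝ (Fin n) → ℂ}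
    (hf : ContDiff ℝ 2 f) (h0 : ∀ x ∉ K, f x = 0) :
    (∫ x, (starRingEnd ℂ) (f x) * lapC f x).im = 0 := by
  have hf' : ContDiff ℝ ((1 : ℕ) + 1) f := by exact_mod_cast hf
  have hfc : Continuous f := hf.continuous
  have hpdc : ∀ j, Continuous (pd j f) := fun j => (contDiff_pd hf' j).continuous
  have hpd1 : ∀ j : Fin n, ContDiff ℝ (1:ℕ) (pd j f) := fun j => contDiff_pd hf' j
  have hpdpdc : ∀ j : Fin n, Continuous (pd j (pd j f)) := fun j => continuous_pd (hpd1 j) j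
  have hconjc : Continuous (fun x => (starRingEnd ℂ) (f x)) := Complex.continuous_conj.comp hfc
  -- integrability of each summand
  have hint1 : ∀ j : Fin n, Integrable (fun x => (starRingEnd ℂ) (f x) * pd j (pd j f) x) := by
    intro j
    exact integrable_off_supp (hconjc.mul (hpdpdc j)) hK
      (fun x hx => by simp [h0 x hx])
  have hsplit : ∫ x, (starRingEnd ℂ) (f x) * lapC f x
      = ∑ j : Fin n, ∫ x, (starRingEnd ℂ) (f x) * pd j (pd j f) x := by
    rw [← integral_finset_sum _ (fun j _ => hint1 j)]
    unfold lapC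
    simp [Finset.mul_sum]
  rw [hsplit]
  rw [Complex.im_sum]
  refine Finset.sum_eq_zero (fun j _ => ?_)
  -- integration by parts in direction e_j
  have hdiff : Differentiable ℝ f := hf.differentiable (by norm_num)
  have hdconj : Differentiable ℝ (fun x => (starRingEnd ℂ) (f x)) := by
    intro x
    exact (Complex.conjCLE.differentiableAt).comp x (hdiff x)
  have hfderivconj : ∀ x, fderiv ℝ (fun y => (starRingEnd ℂ) (f y)) x (EuclideanSpace.single j 1)
      = (starRingEnd ℂ) (pd j f x) := by
    intro x
    have h1 : HasFDerivAt (fun y => (starRingEnd ℂ) (f y))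
        ((Complex.conjCLE.toContinuousLinearMap).comp (fderiv ℝ f x)) x := by
      exact (Complex.conjCLE.toContinuousLinearMap.hasFDerivAt).comp x (hdiff x).hasFDerivAt
    rw [h1.fderiv]
    rfl
  have hibp := integral_mul_fderiv_eq_neg_fderiv_mul_of_integrable
    (f := fun x => (starRingEnd ℂ) (f x)) (g := pd j f) (v := EuclideanSpace.single j 1)
    (μ := volume)
    ?_ ?_ ?_ (fun x _ => hdconj x) (fun x _ => (hpd1 j).differentiable (by norm_num) x)
  · have : (fun x => (starRingEnd ℂ) (f x) * fderiv ℝ (pd j f) x (EuclideanSpace.single j 1))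
        = fun x => (starRingEnd ℂ) (f x) * pd j (pd j f) x := rfl
    rw [this] at hibp
    rw [hibp]
    simp only [Complex.neg_im, neg_eq_zero]
    have h2 : ∀ x, fderiv ℝ (fun y => (starRingEnd ℂ) (f y)) x (EuclideanSpace.single j 1)
        * pd j f x = ((‖pd j f x‖ : ℂ)) ^ 2 := by
      intro x
      rw [hfderivconj x, Complex.conj_mul']
    rw [integral_congr_ae (Filter.Eventually.of_forall h2)]
    have h3 : Integrable (fun x => ((‖pd j f x‖ : ℂ)) ^ 2) := by
      refine integrable_off_supp ?_ hK (fun x hx => by simp [pd_zero_off hK h0 hx j])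
      exact (Complex.continuous_ofReal.comp (hpdc j).norm).pow 2
    have h4 := integral_im (μ := volume) h3
    simp only [RCLike.im_to_complex] at h4
    rw [← h4]
    simp [← Complex.ofReal_pow]
  · refine integrable_off_supp ?_ hK (fun x hx => by simp [pd_zero_off hK h0 hx j])
    have : Continuous fun x => fderiv ℝ (fun y => (starRingEnd ℂ) (f y)) x
        (EuclideanSpace.single j 1) := by
      have : (fun x => fderiv ℝ (fun y => (starRingEnd ℂ) (f y)) x (EuclideanSpace.single j 1))
          = fun x => (starRingEnd ℂ) (pd j f x) := funext hfderivconj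
      rw [this]
      exact Complex.continuous_conj.comp (hpdc j)
    exact this.mul (hpdc j)
  · exact integrable_off_supp (hconjc.mul (hpdpdc j)) hK (fun x hx => by simp [h0 x hx])
  · exact integrable_off_supp (hconjc.mul (hpdc j)) hK (fun x hx => by simp [h0 x hx])



lemma key_complex (a b l : ℂ) (r : ℝ) :
    ((starRingEnd ℂ) (-I * (b - l - r * a)) * a
      + (starRingEnd ℂ) a * (-I * (b - l - r * a))).re
    = 2 * ((starRingEnd ℂ) a * b).im - 2 * ((starRingEnd ℂ) a * l).im := by
  simp only [map_mul, map_sub, map_neg, Complex.conj_I, Complex.conj_ofReal,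
    Complex.add_re, Complex.mul_re, Complex.mul_im, Complex.sub_re, Complex.sub_im,
    Complex.neg_re, Complex.neg_im, Complex.I_re, Complex.I_im, Complex.ofReal_re,
    Complex.ofReal_im, Complex.conj_re, Complex.conj_im]
  ring


lemma L2norm_eq_sqrt {n : ℕ} (f : EuclideanSpace ℝ (Fin n) → ℂ) :
    L2norm f = Real.sqrt (∫ x, ‖f x‖ ^ 2) := (Real.sqrt_eq_rpow _).symm

end helpers

/-- If `i ∂ₜv + Δv + q v = F` on `[0,T] × ℝⁿ`, with `v, F` compactly supported in `x`
and `v(0,·) = 0`, then `‖v(t,·)‖_{L²} ≤ ∫₀ᵗ ‖F(s,·)‖_{L²} ds` for `t ∈ [0,T]`. -/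
theorem stmt1 {n : ℕ} (hn : 1 ≤ n) (T : ℝ) (hT : 0 < T)
    (q : EuclideanSpace ℝ (Fin n) → ℝ)
    (hq_bdd : ∃ M : ℝ, ∀ x, |q x| ≤ M) (hq_cont : Continuous q)
    (v F : ℝ × EuclideanSpace ℝ (Fin n) → ℂ)
    (hv : ContDiff ℝ 1 v) (hF : ContDiff ℝ 1 F)
    (hvx : ∀ t : ℝ, ContDiff ℝ 2 (fun x => v (t, x)))
    (K : Set (EuclideanSpace ℝ (Fin n))) (hK : IsCompact K)
    (hsupp : ∀ t ∈ Set.Icc (0:ℝ) T, ∀ x ∉ K, v (t, x) = 0 ∧ F (t, x) = 0)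
    (hpde : ∀ t ∈ Set.Icc (0:ℝ) T, ∀ x,
      Complex.I * deriv (fun s => v (s, x)) t + lapC (fun y => v (t, y)) x
        + (q x : ℂ) * v (t, x) = F (t, x))
    (hv0 : ∀ x, v (0, x) = 0) :
    ∀ t ∈ Set.Icc (0:ℝ) T,
      L2norm (fun x => v (t, x)) ≤ ∫ s in (0:ℝ)..t, L2norm (fun x => F (s, x)) := by
  have hvc : Continuous v := hv.continuous
  have hFc : Continuous F := hF.continuous
  have hvK : ∀ t ∈ Set.Icc (0:ℝ) T, ∀ x ∉ K, v (t, x) = 0 :=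
    fun t ht x hx => (hsupp t ht x hx).1
  have hFK : ∀ t ∈ Set.Icc (0:ℝ) T, ∀ x ∉ K, F (t, x) = 0 :=
    fun t ht x hx => (hsupp t ht x hx).2
  -- the time derivative of `v`
  set w : ℝ × EuclideanSpace ℝ (Fin n) → ℂ :=
    fun p => fderiv ℝ v p (1, 0) with hwdef
  have hwc : Continuous w := by
    have h1 : ContDiff ℝ 0 (fderiv ℝ v) := hv.fderiv_right (by norm_num)
    exact (h1.clm_apply contDiff_const).continuous
  have hvderiv : ∀ (t : ℝ) (x : EuclideanSpace ℝ (Fin n)),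
      HasDerivAt (fun s => v (s, x)) (w (t, x)) t := by
    intro t x
    have h1 : HasFDerivAt v (fderiv ℝ v (t, x)) (t, x) :=
      (hv.differentiable one_ne_zero (t, x)).hasFDerivAt
    have h2 : HasDerivAt (fun s : ℝ => (s, x)) ((1:ℝ), (0 : EuclideanSpace ℝ (Fin n))) t :=
      (hasDerivAt_id t).prodMk (hasDerivAt_const t x)
    exact h1.comp_hasDerivAt t h2
  have hderiv_eq : ∀ (t : ℝ) x, deriv (fun s => v (s, x)) t = w (t, x) :=
    fun t x => (hvderiv t x).deriv
  -- pointwise derivative of `‖v‖²`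
  set G' : ℝ → EuclideanSpace ℝ (Fin n) → ℝ := fun t x =>
    ((starRingEnd ℂ) (w (t, x)) * v (t, x) + (starRingEnd ℂ) (v (t, x)) * w (t, x)).re
    with hG'def
  have hG'c : Continuous (fun p : ℝ × EuclideanSpace ℝ (Fin n) => G' p.1 p.2) := by
    apply Complex.continuous_re.comp
    exact ((Complex.continuous_conj.comp hwc).mul hvc).add
      ((Complex.continuous_conj.comp hvc).mul hwc)
  have hG'deriv : ∀ (t : ℝ) x, HasDerivAt (fun s => ‖v (s, x)‖ ^ 2) (G' t x) t := by
    intro t x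
    have hconj : HasDerivAt (fun s => (starRingEnd ℂ) (v (s, x)))
        ((starRingEnd ℂ) (w (t, x))) t := by
      have := (Complex.conjCLE.toContinuousLinearMap.hasFDerivAt
        (x := v (t, x))).comp_hasDerivAt t (hvderiv t x)
      exact this
    have hmul := hconj.mul (hvderiv t x)
    have hre := (Complex.reCLM.hasFDerivAt
      (x := (starRingEnd ℂ) (v (t, x)) * v (t, x))).comp_hasDerivAt t hmul
    have heq : (fun s => ((starRingEnd ℂ) (v (s, x)) * v (s, x)).re)
        = fun s => ‖v (s, x)‖ ^ 2 := by
      funext s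
      rw [Complex.conj_mul']
      exact_mod_cast Complex.ofReal_re _
    have hre' : HasDerivAt (fun s => ((starRingEnd ℂ) (v (s, x)) * v (s, x)).re)
        (G' t x) t := hre
    rwa [heq] at hre'
  -- energy and source-norm functions
  set Eg : ℝ → ℝ := fun t => ∫ x, ‖v (t, x)‖ ^ 2 with hEgdef
  set G2 : ℝ → ℝ := fun t => ∫ x, ‖F (t, x)‖ ^ 2 with hG2def
  have hvxc : ∀ t : ℝ, Continuous (fun x => v (t, x)) := fun t =>
    hvc.comp (Continuous.prodMk_right t)
  have hFxc : ∀ t : ℝ, Continuous (fun x => F (t, x)) := fun t =>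
    hFc.comp (Continuous.prodMk_right t)
  have hwxc : ∀ t : ℝ, Continuous (fun x => w (t, x)) := fun t =>
    hwc.comp (Continuous.prodMk_right t)
  have hG'xc : ∀ t : ℝ, Continuous (fun x => G' t x) := fun t =>
    hG'c.comp (Continuous.prodMk_right t)
  -- basic integrability
  have int_v2 : ∀ t ∈ Set.Icc (0:ℝ) T, Integrable (fun x => ‖v (t, x)‖ ^ 2) := by
    intro t ht
    exact integrable_off_supp ((hvxc t).norm.pow 2) hK
      (fun x hx => by simp [hvK t ht x hx])
  have int_F2 : ∀ t ∈ Set.Icc (0:ℝ) T, Integrable (fun x => ‖F (t, x)‖ ^ 2) := by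
    intro t ht
    exact integrable_off_supp ((hFxc t).norm.pow 2) hK
      (fun x hx => by simp [hFK t ht x hx])
  have int_G' : ∀ t ∈ Set.Icc (0:ℝ) T, Integrable (fun x => G' t x) := by
    intro t ht
    refine integrable_off_supp (hG'xc t) hK (fun x hx => ?_)
    simp [hG'def, hvK t ht x hx]
  -- (1) derivative of the energy
  have hEgd : ∀ t₀ ∈ Set.Ioo (0:ℝ) T, HasDerivAt Eg (∫ x, G' t₀ x) t₀ := by
    intro t₀ ht₀
    have ht₀I : t₀ ∈ Set.Icc (0:ℝ) T := ⟨ht₀.1.le, ht₀.2.le⟩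
    obtain ⟨C, hC⟩ := ((isCompact_Icc (a := (0:ℝ)) (b := T)).prod hK).exists_bound_of_continuousOn
      hG'c.continuousOn
    set bound : EuclideanSpace ℝ (Fin n) → ℝ := K.indicator (fun _ => C) with hbdef
    set δ : ℝ := min t₀ (T - t₀) with hδdef
    have hδpos : 0 < δ := lt_min ht₀.1 (by linarith [ht₀.2])
    have hball : Metric.ball t₀ δ ⊆ Set.Ioo 0 T := by
      intro s hs
      rw [Metric.mem_ball, Real.dist_eq, abs_lt] at hs
      constructor
      · have := min_le_left t₀ (T - t₀); linarith [hs.1]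
      · have := min_le_right t₀ (T - t₀); linarith [hs.2]
    have key := (hasDerivAt_integral_of_dominated_loc_of_deriv_le (μ := volume)
      (F := fun t x => ‖v (t, x)‖ ^ 2) (F' := fun t x => G' t x) (x₀ := t₀)
      (bound := bound) (Metric.ball_mem_nhds t₀ hδpos)
      (Filter.Eventually.of_forall (fun s =>
        (((hvxc s).norm.pow 2).aestronglyMeasurable)))
      (int_v2 t₀ ht₀I)
      ((hG'xc t₀).aestronglyMeasurable)
      (Filter.Eventually.of_forall (fun x => ?_))
      ?_
      (Filter.Eventually.of_forall (fun x s _ => hG'deriv s x))).2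
    · exact key
    · -- the bound
      intro s hs
      by_cases hx : x ∈ K
      · rw [hbdef, Set.indicator_of_mem hx]
        exact hC (s, x) ⟨Set.mem_of_mem_of_subset hs (hball.trans Set.Ioo_subset_Icc_self), hx⟩
      · rw [hbdef, Set.indicator_of_notMem hx]
        have hv0' : v (s, x) = 0 :=
          hvK s (Set.Ioo_subset_Icc_self (hball hs)) x hx
        simp [hG'def, hv0']
    · -- integrability of the bound
      rw [hbdef, integrable_indicator_iff hK.measurableSet]
      exact integrableOn_const hK.measure_lt_top.ne
  -- (2) pointwise identity from the PDE
  have hpt : ∀ t ∈ Set.Icc (0:ℝ) T, ∀ x, G' t x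
      = 2 * ((starRingEnd ℂ) (v (t, x)) * F (t, x)).im
        - 2 * ((starRingEnd ℂ) (v (t, x)) * lapC (fun y => v (t, y)) x).im := by
    intro t ht x
    have h := hpde t ht x
    rw [hderiv_eq] at h
    have hw_eq : w (t, x) = -Complex.I * (F (t, x) - lapC (fun y => v (t, y)) x
        - (q x : ℂ) * v (t, x)) := by
      linear_combination (-Complex.I) * h + (w (t, x)) * Complex.I_sq
    rw [hG'def]
    simp only []
    rw [hw_eq, key_complex]
  -- (3) the differential inequality
  have hDle : ∀ t ∈ Set.Ioo (0:ℝ) T,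
      (∫ x, G' t x) ≤ 2 * Real.sqrt (G2 t) * Real.sqrt (Eg t) := by
    intro t ht
    have htI : t ∈ Set.Icc (0:ℝ) T := ⟨ht.1.le, ht.2.le⟩
    have hlapc : Continuous (fun x => lapC (fun y => v (t, y)) x) := by
      have h2 : ContDiff ℝ ((1:ℕ) + 1) (fun x => v (t, x)) := by exact_mod_cast hvx t
      unfold lapC
      exact continuous_finset_sum _ (fun j _ => continuous_pd (contDiff_pd h2 j) j)
    have int_vF : Integrable (fun x => ((starRingEnd ℂ) (v (t, x)) * F (t, x)).im) := by
      refine integrable_off_supp ?_ hK (fun x hx => by simp [hvK t htI x hx])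
      exact Complex.continuous_im.comp
        (((Complex.continuous_conj.comp (hvxc t))).mul (hFxc t))
    have int_vlap : Integrable
        (fun x => (starRingEnd ℂ) (v (t, x)) * lapC (fun y => v (t, y)) x) := by
      refine integrable_off_supp ?_ hK (fun x hx => by simp [hvK t htI x hx])
      exact ((Complex.continuous_conj.comp (hvxc t))).mul hlapc
    have int_vlap_im : Integrable
        (fun x => ((starRingEnd ℂ) (v (t, x)) * lapC (fun y => v (t, y)) x).im) := by
      refine integrable_off_supp ?_ hK (fun x hx => by simp [hvK t htI x hx])
      exact Complex.continuous_im.comp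
        (((Complex.continuous_conj.comp (hvxc t))).mul hlapc)
    have step1 : (∫ x, G' t x)
        = 2 * (∫ x, ((starRingEnd ℂ) (v (t, x)) * F (t, x)).im)
          - 2 * (∫ x, ((starRingEnd ℂ) (v (t, x)) * lapC (fun y => v (t, y)) x).im) := by
      rw [← integral_const_mul, ← integral_const_mul, ← integral_sub
        (int_vF.const_mul 2) (int_vlap_im.const_mul 2)]
      exact integral_congr_ae (Filter.Eventually.of_forall (fun x => hpt t htI x))
    have step2 : (∫ x, ((starRingEnd ℂ) (v (t, x)) * lapC (fun y => v (t, y)) x).im) = 0 := by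
      have h4 := integral_im (μ := volume) int_vlap
      simp only [RCLike.im_to_complex] at h4
      rw [h4]
      exact im_integral_conj_mul_lap hK (hvx t) (hvK t htI)
    have step3 : (∫ x, ((starRingEnd ℂ) (v (t, x)) * F (t, x)).im)
        ≤ ∫ x, ‖v (t, x)‖ * ‖F (t, x)‖ := by
      refine integral_mono int_vF ?_ (fun x => ?_)
      · exact integrable_off_supp ((hvxc t).norm.mul (hFxc t).norm) hK
          (fun x hx => by simp [hvK t htI x hx])
      · calc ((starRingEnd ℂ) (v (t, x)) * F (t, x)).im
            ≤ |((starRingEnd ℂ) (v (t, x)) * F (t, x)).im| := le_abs_self _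
          _ ≤ ‖(starRingEnd ℂ) (v (t, x)) * F (t, x)‖ := Complex.abs_im_le_norm _
          _ = ‖v (t, x)‖ * ‖F (t, x)‖ := by
              rw [norm_mul, RCLike.norm_conj]
    have step4 : (∫ x, ‖v (t, x)‖ * ‖F (t, x)‖)
        ≤ Real.sqrt (Eg t) * Real.sqrt (G2 t) := by
      refine cs_integral (fun x => norm_nonneg _) (fun x => norm_nonneg _)
        ?_ ?_ ?_
      · exact int_v2 t htI
      · exact int_F2 t htI
      · exact integrable_off_supp ((hvxc t).norm.mul (hFxc t).norm) hK
          (fun x hx => by simp [hvK t htI x hx])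
    rw [step1, step2]
    nlinarith [step3, step4]
  -- (4) continuity of the energy on `[0, T]`
  have hEgcont : ContinuousOn Eg (Set.Icc 0 T) := by
    obtain ⟨C, hC⟩ := ((isCompact_Icc (a := (0:ℝ)) (b := T)).prod hK).exists_bound_of_continuousOn
      ((hvc.norm.pow 2).continuousOn :
        ContinuousOn (fun p : ℝ × EuclideanSpace ℝ (Fin n) => ‖v p‖ ^ 2) _)
    intro t₀ ht₀
    refine continuousWithinAt_of_dominated
      (F := fun t x => ‖v (t, x)‖ ^ 2) (bound := K.indicator (fun _ => C)) ?_ ?_ ?_ ?_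
    · exact Filter.Eventually.of_forall (fun s => ((hvxc s).norm.pow 2).aestronglyMeasurable)
    · refine eventually_nhdsWithin_of_forall (fun s hs => ?_)
      refine Filter.Eventually.of_forall (fun x => ?_)
      by_cases hx : x ∈ K
      · rw [Set.indicator_of_mem hx]
        have := hC (s, x) ⟨hs, hx⟩
        simpa using this
      · rw [Set.indicator_of_notMem hx]
        simp [hvK s hs x hx]
    · rw [integrable_indicator_iff hK.measurableSet]
      exact integrableOn_const hK.measure_lt_top.ne
    · exact Filter.Eventually.of_forall
        (fun x => ((hvc.comp (continuous_id.prodMk continuous_const)).norm.pow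
          2).continuousAt.continuousWithinAt)
  -- (5) continuity of the source-norm on `[0, T]`
  have hG2cont : ContinuousOn G2 (Set.Icc 0 T) := by
    obtain ⟨C, hC⟩ := ((isCompact_Icc (a := (0:ℝ)) (b := T)).prod hK).exists_bound_of_continuousOn
      ((hFc.norm.pow 2).continuousOn :
        ContinuousOn (fun p : ℝ × EuclideanSpace ℝ (Fin n) => ‖F p‖ ^ 2) _)
    intro t₀ ht₀
    refine continuousWithinAt_of_dominated
      (F := fun t x => ‖F (t, x)‖ ^ 2) (bound := K.indicator (fun _ => C)) ?_ ?_ ?_ ?_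
    · exact Filter.Eventually.of_forall (fun s => ((hFxc s).norm.pow 2).aestronglyMeasurable)
    · refine eventually_nhdsWithin_of_forall (fun s hs => ?_)
      refine Filter.Eventually.of_forall (fun x => ?_)
      by_cases hx : x ∈ K
      · rw [Set.indicator_of_mem hx]
        have := hC (s, x) ⟨hs, hx⟩
        simpa using this
      · rw [Set.indicator_of_notMem hx]
        simp [hFK s hs x hx]
    · rw [integrable_indicator_iff hK.measurableSet]
      exact integrableOn_const hK.measure_lt_top.ne
    · exact Filter.Eventually.of_forall
        (fun x => ((hFc.comp (continuous_id.prodMk continuous_const)).norm.pow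
          2).continuousAt.continuousWithinAt)
  -- clamped source-norm, globally continuous
  set σ : ℝ → ℝ := fun s => max 0 (min s T) with hσdef
  have hσc : Continuous σ := continuous_const.max (continuous_id.min continuous_const)
  have hσmem : ∀ s, σ s ∈ Set.Icc (0:ℝ) T := by
    intro s
    constructor
    · exact le_max_left _ _
    · exact max_le (hT.le) (min_le_right _ _)
  have hσid : ∀ s ∈ Set.Icc (0:ℝ) T, σ s = s := by
    intro s hs
    rw [hσdef]
    simp only [min_eq_left hs.2, max_eq_right hs.1]
  set fcl : ℝ → ℝ := fun s => Real.sqrt (G2 (σ s)) with hfcldef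
  have hfclc : Continuous fcl :=
    Real.continuous_sqrt.comp (hG2cont.comp_continuous hσc hσmem)
  have hfclnn : ∀ s, 0 ≤ fcl s := fun s => Real.sqrt_nonneg _
  -- apply the Grönwall-type lemma
  have hE0 : Eg 0 = 0 := by
    rw [hEgdef]
    simp [hv0]
  have hEnn : ∀ t, 0 ≤ Eg t := fun t => integral_nonneg (fun x => sq_nonneg _)
  have main := gronwall_aux hT hEgcont hE0 hEnn hfclc hfclnn hEgd ?_
  · intro t ht
    have h1 : L2norm (fun x => v (t, x)) = Real.sqrt (Eg t) := L2norm_eq_sqrt _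
    have h2 : ∫ s in (0:ℝ)..t, L2norm (fun x => F (s, x)) = ∫ s in (0:ℝ)..t, fcl s := by
      refine intervalIntegral.integral_congr (fun s hs => ?_)
      have hsI : s ∈ Set.Icc (0:ℝ) T := by
        rw [Set.uIcc_of_le ht.1] at hs
        exact ⟨hs.1, hs.2.trans ht.2⟩
      rw [hfcldef]
      simp only [hσid s hsI]
      exact L2norm_eq_sqrt _
    rw [h1, h2]
    exact main t ht
  · intro t ht
    have h3 : fcl t = Real.sqrt (G2 t) := by
      rw [hfcldef]
      simp only [hσid t ⟨ht.1.le, ht.2.le⟩]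
    rw [h3]
    exact hDle t ht
end
end

section
/- Let n ≥ 1, T > 0, and let q : ℝⁿ → ℝ be bounded and continuous. Let v, F : ℝ × ℝⁿ → ℂ be twice continuously differentiable, and suppose there is a compact set K ⊂ ℝⁿ such that v(t,·) and F(t,·) vanish outside K for every t ∈ [0,T]. If i ∂ₜv + Δv + q v = F on [0,T] × ℝⁿ, v(0,·) = 0 and F(0,·) = 0, then there is a constant C, depending only on T and on the supremum of |q|, such that for every t ∈ [0,T] and every η > 0, ‖∇v(t,·)‖_{L²} ≤ C ( η ∫₀ᵀ ‖∂ₜF(s,·)‖_{L²} ds + η⁻¹ ∫₀ᵀ ‖F(s,·)‖_{L²} ds ). -/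
open MeasureTheory Complex

noncomputable section

/-- `L²`-norm of the (spatial) gradient. -/
def gradL2norm {n : ℕ} (f : EuclideanSpace ℝ (Fin n) → ℂ) : ℝ :=
  (∫ x, ∑ j, ‖pd j f x‖ ^ 2) ^ (1/2 : ℝ)

section helpers

variable {n : ℕ}

local notation "Ω" => EuclideanSpace ℝ (Fin n)

/-- If a differentiable function vanishes on `[a,b]`, its derivative vanishes there too. -/
lemma deriv_eq_zero_of_eqOn_zero' {f : ℝ → ℂ} {a b t : ℝ} (hab : a < b) (ht : t ∈ Set.Icc a b)
    (hf : DifferentiableAt ℝ f t) (h0 : ∀ s ∈ Set.Icc a b, f s = 0) : deriv f t = 0 := by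
  have hu : UniqueDiffWithinAt ℝ (Set.Icc a b) t := uniqueDiffOn_Icc hab t ht
  have h1 : derivWithin f (Set.Icc a b) t = deriv f t :=
    (hf.hasDerivAt.hasDerivWithinAt).derivWithin hu
  have h2 : derivWithin f (Set.Icc a b) t = derivWithin (fun _ => (0:ℂ)) (Set.Icc a b) t :=
    derivWithin_congr (fun s hs => h0 s hs) (h0 t ht)
  rw [← h1, h2, derivWithin_fun_const, Pi.zero_apply]

lemma integrable_of_supp {E : Type*} [NormedAddCommGroup E] {K : Set Ω}
    (hK : IsCompact K) {f : Ω → E} (hf : Continuous f)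
    (h0 : ∀ x ∉ K, f x = 0) : Integrable f :=
  hf.integrable_of_hasCompactSupport (HasCompactSupport.intro hK h0)

lemma integrable_indicator_const {K : Set Ω} (hK : IsCompact K) (C : ℝ) :
    Integrable (K.indicator fun _ => C) :=
  (integrableOn_const hK.measure_lt_top.ne).integrable_indicator hK.measurableSet

lemma amgm_param {r X Y : ℝ} (hX : 0 ≤ X) (hY : 0 ≤ Y)
    (h : ∀ c : ℝ, 0 < c → r ≤ (c * X + Y / c) / 2) : r ≤ Real.sqrt (X * Y) := by
  have key : ∀ ε > (0:ℝ), r ≤ Real.sqrt ((X + ε) * (Y + ε)) := by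
    intro ε hε
    set A := Real.sqrt (X + ε) with hA
    set B := Real.sqrt (Y + ε) with hB
    have hApos : 0 < A := Real.sqrt_pos.2 (by linarith)
    have hBpos : 0 < B := Real.sqrt_pos.2 (by linarith)
    have hA2 : A ^ 2 = X + ε := Real.sq_sqrt (by linarith)
    have hB2 : B ^ 2 = Y + ε := Real.sq_sqrt (by linarith)
    have hc := h (B / A) (div_pos hBpos hApos)
    have h1 : (B / A) * X ≤ A * B := by
      rw [div_mul_eq_mul_div, div_le_iff₀ hApos]; nlinarith
    have h2 : Y / (B / A) ≤ A * B := by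
      rw [div_div_eq_mul_div, div_le_iff₀ hBpos]; nlinarith
    have hAB : A * B = Real.sqrt ((X + ε) * (Y + ε)) := (Real.sqrt_mul (by linarith) _).symm
    linarith [hc, hAB ▸ (by linarith : r ≤ A * B)]
  refine ge_of_tendsto (f := fun ε : ℝ => Real.sqrt ((X + ε) * (Y + ε)))
    (x := nhdsWithin 0 (Set.Ioi 0)) ?_ ?_
  · have hcont : Filter.Tendsto (fun ε : ℝ => Real.sqrt ((X + ε) * (Y + ε))) (nhds 0)
        (nhds (Real.sqrt (X * Y))) := by
      have : Continuous fun ε : ℝ => Real.sqrt ((X + ε) * (Y + ε)) :=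
        Real.continuous_sqrt.comp (by continuity)
      simpa using this.tendsto 0
    exact hcont.mono_left nhdsWithin_le_nhds
  · filter_upwards [self_mem_nhdsWithin] with ε hε using key ε hε

/-- Cauchy–Schwarz for integrals of continuous compactly supported functions,
norm-product version. -/
lemma integral_norm_mul_le {K : Set Ω} (hK : IsCompact K) {f g : Ω → ℂ}
    (hf : Continuous f) (hg : Continuous g) (hf0 : ∀ x ∉ K, f x = 0) (hg0 : ∀ x ∉ K, g x = 0) :
    ∫ x, ‖f x‖ * ‖g x‖ ≤
      Real.sqrt (∫ x, ‖f x‖ ^ 2) * Real.sqrt (∫ x, ‖g x‖ ^ 2) := by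
  have hX : (0:ℝ) ≤ ∫ x, ‖f x‖ ^ 2 := integral_nonneg fun x => by positivity
  have hY : (0:ℝ) ≤ ∫ x, ‖g x‖ ^ 2 := integral_nonneg fun x => by positivity
  have hfi2 : Integrable fun x => ‖f x‖ ^ 2 :=
    integrable_of_supp hK (by fun_prop) (fun x hx => by simp [hf0 x hx])
  have hgi2 : Integrable fun x => ‖g x‖ ^ 2 :=
    integrable_of_supp hK (by fun_prop) (fun x hx => by simp [hg0 x hx])
  have hfg : Integrable fun x => ‖f x‖ * ‖g x‖ :=
    integrable_of_supp hK (by fun_prop) (fun x hx => by simp [hf0 x hx])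
  rw [← Real.sqrt_mul hX]
  refine amgm_param hX hY fun c hc => ?_
  have pt : ∀ x, ‖f x‖ * ‖g x‖ ≤ (c * ‖f x‖ ^ 2 + ‖g x‖ ^ 2 / c) / 2 := by
    intro x
    have expand : (c * ‖f x‖ ^ 2 + ‖g x‖ ^ 2 / c) / 2 - ‖f x‖ * ‖g x‖
        = (c * ‖f x‖ - ‖g x‖) ^ 2 / (2 * c) := by field_simp; ring
    nlinarith [div_nonneg (sq_nonneg (c * ‖f x‖ - ‖g x‖)) (by linarith : (0:ℝ) ≤ 2 * c)]
  calc ∫ x, ‖f x‖ * ‖g x‖ ≤ ∫ x, (c * ‖f x‖ ^ 2 + ‖g x‖ ^ 2 / c) / 2 :=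
        integral_mono hfg (by exact ((hfi2.const_mul c).add (hgi2.div_const c)).div_const 2) pt
    _ = (c * (∫ x, ‖f x‖ ^ 2) + (∫ x, ‖g x‖ ^ 2) / c) / 2 := by
        rw [integral_div, integral_add (hfi2.const_mul c) (hgi2.div_const c),
          integral_const_mul, integral_div]

/-- Cauchy–Schwarz for integrals of continuous compactly supported functions. -/
lemma integral_cs {K : Set Ω} (hK : IsCompact K) {f g : Ω → ℂ}
    (hf : Continuous f) (hg : Continuous g) (hf0 : ∀ x ∉ K, f x = 0) (hg0 : ∀ x ∉ K, g x = 0) :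
    ‖∫ x, f x * (starRingEnd ℂ) (g x)‖ ≤
      Real.sqrt (∫ x, ‖f x‖ ^ 2) * Real.sqrt (∫ x, ‖g x‖ ^ 2) := by
  refine le_trans (le_trans (norm_integral_le_integral_norm _) ?_)
    (integral_norm_mul_le hK hf hg hf0 hg0)
  refine le_of_eq (integral_congr_ae (Filter.Eventually.of_forall fun x => ?_))
  simp [norm_mul]

/-- Continuity on `[a,b]` of a parametric integral with uniform compact support. -/
lemma contOn_param {E : Type*} [NormedAddCommGroup E] [NormedSpace ℝ E] {K : Set Ω}
    (hK : IsCompact K) {a b : ℝ} {f : ℝ × Ω → E} (hf : Continuous f)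
    (hsupp : ∀ t ∈ Set.Icc a b, ∀ x ∉ K, f (t, x) = 0) :
    ContinuousOn (fun t => ∫ x, f (t, x)) (Set.Icc a b) := by
  intro t₀ ht₀
  obtain ⟨C, hC⟩ : ∃ C, ∀ p ∈ (Set.Icc a b ×ˢ K : Set (ℝ × Ω)), ‖f p‖ ≤ C :=
    (isCompact_Icc.prod hK).exists_bound_of_continuousOn hf.continuousOn
  set B := max C 0 with hB
  have hCB : ∀ p ∈ (Set.Icc a b ×ˢ K : Set (ℝ × Ω)), ‖f p‖ ≤ B :=
    fun p hp => (hC p hp).trans (le_max_left _ _)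
  refine continuousWithinAt_of_dominated (bound := K.indicator fun _ => B) ?_ ?_ ?_ ?_
  · exact Filter.Eventually.of_forall fun t =>
      (hf.comp (continuous_const.prodMk continuous_id)).aestronglyMeasurable
  · filter_upwards [self_mem_nhdsWithin] with t ht
    refine Filter.Eventually.of_forall fun x => ?_
    by_cases hx : x ∈ K
    · simpa [Set.indicator_of_mem hx] using hCB (t, x) ⟨ht, hx⟩
    · simp [Set.indicator_of_notMem hx, hsupp t ht x hx]
  · exact integrable_indicator_const hK B
  · exact Filter.Eventually.of_forall fun x =>
      (hf.comp (continuous_id.prodMk continuous_const)).continuousWithinAt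

/-- Differentiation under the integral sign, with uniform compact support,
at an interior point of the time interval. -/
lemma hasDerivAt_param {E : Type*} [NormedAddCommGroup E] [NormedSpace ℝ E] {K : Set Ω}
    (hK : IsCompact K) {a b t : ℝ} (ht : t ∈ Set.Ioo a b) {f f' : ℝ × Ω → E}
    (hf : Continuous f) (hf' : Continuous f')
    (hd : ∀ s ∈ Set.Ioo a b, ∀ x, HasDerivAt (fun τ => f (τ, x)) (f' (s, x)) s)
    (hsupp0 : ∀ s ∈ Set.Ioo a b, ∀ x ∉ K, f (s, x) = 0)
    (hsupp' : ∀ s ∈ Set.Ioo a b, ∀ x ∉ K, f' (s, x) = 0) :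
    HasDerivAt (fun s => ∫ x, f (s, x)) (∫ x, f' (t, x)) t := by
  obtain ⟨ε, hε, hball⟩ : ∃ ε > 0, Metric.ball t ε ⊆ Set.Ioo a b :=
    Metric.isOpen_iff.1 isOpen_Ioo t ht
  obtain ⟨C, hC⟩ : ∃ C, ∀ p ∈ ((Metric.closedBall t (ε/2)) ×ˢ K : Set (ℝ × Ω)), ‖f' p‖ ≤ C :=
    ((isCompact_closedBall t (ε/2)).prod hK).exists_bound_of_continuousOn hf'.continuousOn
  set B := max C 0 with hB
  have hCB : ∀ p ∈ ((Metric.closedBall t (ε/2)) ×ˢ K : Set (ℝ × Ω)), ‖f' p‖ ≤ B :=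
    fun p hp => (hC p hp).trans (le_max_left _ _)
  have hballs : Metric.ball t (ε/2) ⊆ Set.Ioo a b :=
    le_trans (Metric.ball_subset_ball (by linarith)) hball
  have := hasDerivAt_integral_of_dominated_loc_of_deriv_le (μ := (volume : Measure Ω))
    (F := fun s x => f (s, x)) (F' := fun s x => f' (s, x)) (x₀ := t)
    (bound := K.indicator fun _ => B) (s := Metric.ball t (ε/2)) (Metric.ball_mem_nhds t (by positivity))
    (Filter.Eventually.of_forall fun s =>
      (hf.comp (continuous_const.prodMk continuous_id)).aestronglyMeasurable)
    (integrable_of_supp hK (hf.comp (continuous_const.prodMk continuous_id))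
      (hsupp0 t (hball (Metric.mem_ball_self hε))))
    ((hf'.comp (continuous_const.prodMk continuous_id)).aestronglyMeasurable)
    ?_ ?_ ?_
  · exact this.2
  · refine Filter.Eventually.of_forall fun x => fun s hs => ?_
    by_cases hx : x ∈ K
    · simpa [Set.indicator_of_mem hx] using hCB (s, x) ⟨Metric.ball_subset_closedBall hs, hx⟩
    · simp [Set.indicator_of_notMem hx, hsupp' s (hballs hs) x hx]
  · exact integrable_indicator_const hK B
  · exact Filter.Eventually.of_forall fun x s hs => hd s (hballs hs) x

lemma pd_zero_outside {K : Set Ω} (hKc : IsClosed K) {f : Ω → ℂ} (h0 : ∀ x ∉ K, f x = 0)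
    {x : Ω} (hx : x ∉ K) (j : Fin n) : pd j f x = 0 := by
  have hev : f =ᶠ[nhds x] fun _ => (0:ℂ) := by
    filter_upwards [hKc.isOpen_compl.mem_nhds hx] with y hy using h0 y hy
  have : fderiv ℝ f x = fderiv ℝ (fun _ => (0:ℂ)) x := hev.fderiv_eq
  simp [pd, this]

lemma pd_continuous (j : Fin n) {f : Ω → ℂ} (hf : ContDiff ℝ 1 f) :
    Continuous (pd j f) :=
  (hf.continuous_fderiv one_ne_zero).clm_apply continuous_const

lemma pd_contDiff (j : Fin n) {f : Ω → ℂ} (hf : ContDiff ℝ 2 f) :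
    ContDiff ℝ 1 (pd j f) :=
  (hf.fderiv_right (by norm_num)).clm_apply contDiff_const

lemma pd_conj (j : Fin n) {f : Ω → ℂ} (hf : Differentiable ℝ f) (x : Ω) :
    pd j (fun y => (starRingEnd ℂ) (f y)) x = (starRingEnd ℂ) (pd j f x) := by
  have h : HasFDerivAt (fun y => (starRingEnd ℂ) (f y))
      ((Complex.conjCLE : ℂ ≃L[ℝ] ℂ).toContinuousLinearMap.comp (fderiv ℝ f x)) x :=
    (Complex.conjCLE.toContinuousLinearMap.hasFDerivAt.comp x (hf x).hasFDerivAt)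
  simp [pd, h.fderiv]

lemma byparts {K : Set Ω} (hK : IsCompact K) (j : Fin n) {f g : Ω → ℂ}
    (hf : ContDiff ℝ 1 f) (hg : ContDiff ℝ 2 g)
    (hf0 : ∀ x ∉ K, f x = 0) (hg0 : ∀ x ∉ K, g x = 0) :
    ∫ x, f x * pd j (pd j g) x = - ∫ x, pd j f x * pd j g x := by
  have h1 : Integrable fun x => pd j f x * pd j g x :=
    integrable_of_supp hK ((pd_continuous j hf).mul (pd_continuous j (hg.of_le one_le_two)))
      (fun x hx => by rw [pd_zero_outside hK.isClosed hf0 hx, zero_mul])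
  have h2 : Integrable fun x => f x * pd j (pd j g) x := by
    refine integrable_of_supp hK ((hf.continuous).mul (pd_continuous j (pd_contDiff j hg))) ?_
    intro x hx; rw [hf0 x hx, zero_mul]
  have h3 : Integrable fun x => f x * pd j g x :=
    integrable_of_supp hK ((hf.continuous).mul (pd_continuous j (hg.of_le one_le_two)))
      (fun x hx => by rw [hf0 x hx, zero_mul])
  exact integral_mul_fderiv_eq_neg_fderiv_mul_of_integrable h1 h2 h3
    (fun x _ => hf.differentiable one_ne_zero x) (fun x _ => (pd_contDiff j hg).differentiable one_ne_zero x)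

lemma lap_pairing {K : Set Ω} (hK : IsCompact K) {f g : Ω → ℂ}
    (hf : ContDiff ℝ 2 f) (hg : ContDiff ℝ 1 g)
    (hf0 : ∀ x ∉ K, f x = 0) (hg0 : ∀ x ∉ K, g x = 0) :
    ∫ x, lapC f x * (starRingEnd ℂ) (g x)
      = -∑ j, ∫ x, pd j f x * (starRingEnd ℂ) (pd j g x) := by
  have key : ∀ j : Fin n, ∫ x, pd j (pd j f) x * (starRingEnd ℂ) (g x)
      = - ∫ x, pd j f x * (starRingEnd ℂ) (pd j g x) := by
    intro j
    have hconj : ContDiff ℝ 1 fun y => (starRingEnd ℂ) (g y) :=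
      (Complex.conjCLE : ℂ ≃L[ℝ] ℂ).toContinuousLinearMap.contDiff.comp hg
    have := byparts hK j (f := fun y => (starRingEnd ℂ) (g y)) (g := f) hconj hf
      (fun x hx => by show (starRingEnd ℂ) (g x) = 0; rw [hg0 x hx, map_zero]) hf0
    calc ∫ x, pd j (pd j f) x * (starRingEnd ℂ) (g x)
        = ∫ x, (starRingEnd ℂ) (g x) * pd j (pd j f) x := by
          congr 1; funext x; ring
      _ = - ∫ x, pd j (fun y => (starRingEnd ℂ) (g y)) x * pd j f x := this
      _ = - ∫ x, pd j f x * (starRingEnd ℂ) (pd j g x) := by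
          congr 1; apply integral_congr_ae; filter_upwards with x
          rw [pd_conj j (hg.differentiable one_ne_zero) x]; ring
  have hsum : ∫ x, lapC f x * (starRingEnd ℂ) (g x)
      = ∑ j, ∫ x, pd j (pd j f) x * (starRingEnd ℂ) (g x) := by
    rw [← integral_finset_sum]
    · congr 1; funext x; rw [lapC, Finset.sum_mul]
    · intro j _
      refine integrable_of_supp hK ((pd_continuous j (pd_contDiff j hf)).mul ?_) ?_
      · exact Complex.continuous_conj.comp hg.continuous
      · intro x hx
        rw [pd_zero_outside hK.isClosed (fun y hy => pd_zero_outside hK.isClosed hf0 hy j) hx,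
          zero_mul]
  rw [hsum]
  rw [Finset.sum_congr rfl fun j _ => key j, ← Finset.sum_neg_distrib]

lemma hasDerivAt_norm_sq_comp {z : ℝ → ℂ} {z' : ℂ} {t : ℝ} (hz : HasDerivAt z z' t) :
    HasDerivAt (fun s => ‖z s‖ ^ 2) (2 * (z' * (starRingEnd ℂ) (z t)).re) t := by
  have hre : HasDerivAt (fun s => (z s).re) z'.re t :=
    (Complex.reCLM.hasFDerivAt.comp_hasDerivAt t hz)
  have him : HasDerivAt (fun s => (z s).im) z'.im t :=
    (Complex.imCLM.hasFDerivAt.comp_hasDerivAt t hz)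
  have h : HasDerivAt (fun s => (z s).re * (z s).re + (z s).im * (z s).im) _ t :=
    (hre.mul hre).add (him.mul him)
  have heq : (fun s => (z s).re * (z s).re + (z s).im * (z s).im) = fun s => ‖z s‖ ^ 2 := by
    funext s
    rw [← Complex.normSq_apply, Complex.normSq_eq_norm_sq]
  rw [heq] at h
  convert h using 1
  simp [Complex.mul_re, Complex.conj_re, Complex.conj_im]
  ring

/-- The abstract energy estimate. -/
lemma energy_est {K : Set Ω} (hK : IsCompact K) {T : ℝ} (hT : 0 < T)
    {u u' : ℝ × Ω → ℂ} (hu : Continuous u) (hu' : Continuous u')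
    (hd : ∀ t ∈ Set.Ioo 0 T, ∀ x, HasDerivAt (fun s => u (s, x)) (u' (t, x)) t)
    (hsupp : ∀ t ∈ Set.Icc 0 T, ∀ x ∉ K, u (t, x) = 0)
    (hsupp' : ∀ t ∈ Set.Ioo 0 T, ∀ x ∉ K, u' (t, x) = 0)
    (h0 : ∀ x, u (0, x) = 0)
    {h : ℝ → ℝ} (hh : ContinuousOn h (Set.Icc 0 T)) (hhnn : ∀ s ∈ Set.Icc 0 T, 0 ≤ h s)
    (hb : ∀ t ∈ Set.Ioo 0 T,
      (∫ x, (u' (t, x) * (starRingEnd ℂ) (u (t, x))).re)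
        ≤ h t * Real.sqrt (∫ x, ‖u (t, x)‖ ^ 2)) :
    ∀ t ∈ Set.Icc 0 T, Real.sqrt (∫ x, ‖u (t, x)‖ ^ 2) ≤ ∫ s in (0:ℝ)..t, h s := by
  set G : ℝ → ℝ := fun t => ∫ x, ‖u (t, x)‖ ^ 2 with hG
  have hGnn : ∀ t, 0 ≤ G t := fun t => integral_nonneg fun x => by positivity
  have hGc : ContinuousOn G (Set.Icc 0 T) := by
    refine contOn_param hK (f := fun p => ‖u p‖ ^ 2) (by fun_prop) ?_
    intro t ht x hx; show ‖u (t, x)‖ ^ 2 = 0; rw [hsupp t ht x hx]; simp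
  have hG0 : G 0 = 0 := by
    have : (fun x => ‖u (0, x)‖ ^ 2) = fun _ => (0:ℝ) := by
      funext x; rw [h0 x]; simp
    rw [hG]; simp only [this, integral_zero]
  set D : ℝ → ℝ := fun t => ∫ x, 2 * (u' (t, x) * (starRingEnd ℂ) (u (t, x))).re with hD
  have hG' : ∀ t ∈ Set.Ioo 0 T, HasDerivAt G (D t) t := by
    intro t ht
    refine hasDerivAt_param hK ht (f := fun p => ‖u p‖ ^ 2)
      (f' := fun p => 2 * (u' p * (starRingEnd ℂ) (u p)).re) (by fun_prop) (by fun_prop) ?_ ?_ ?_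
    · intro s hs x
      exact hasDerivAt_norm_sq_comp (hd s hs x)
    · intro s hs x hx; show ‖u (s, x)‖ ^ 2 = 0
      rw [hsupp s (Set.mem_Icc_of_Ioo hs) x hx]; simp
    · intro s hs x hx; show 2 * (u' (s, x) * (starRingEnd ℂ) (u (s, x))).re = 0
      rw [hsupp' s hs x hx]; simp
  have hDb : ∀ t ∈ Set.Ioo 0 T, D t ≤ 2 * h t * Real.sqrt (G t) := by
    intro t ht
    have hrw : D t = 2 * ∫ x, (u' (t, x) * (starRingEnd ℂ) (u (t, x))).re := by
      rw [hD]; exact integral_const_mul 2 _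
    rw [hrw]
    have := hb t ht
    nlinarith [this]
  have hhint : ∀ t ∈ Set.Icc 0 T, IntervalIntegrable h volume 0 t := by
    intro t ht
    refine (hh.mono ?_).intervalIntegrable
    rw [Set.uIcc_of_le ht.1]
    exact Set.Icc_subset_Icc le_rfl ht.2
  intro t ht
  refine le_of_forall_pos_le_add fun ε hε => ?_
  set P : ℝ → ℝ := fun s => ∫ σ in (0:ℝ)..s, h σ with hPdef
  have hPcont : ContinuousOn P (Set.Icc 0 T) := by
    have := intervalIntegral.continuousOn_primitive_interval (a := (0:ℝ)) (b := T)
      (μ := volume) (f := h) (by rw [Set.uIcc_of_le hT.le]; exact hh.integrableOn_Icc)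
    rwa [Set.uIcc_of_le hT.le] at this
  set φ : ℝ → ℝ := fun s => Real.sqrt (G s + ε ^ 2) - P s with hφdef
  have hSpos : ∀ s, 0 < Real.sqrt (G s + ε ^ 2) :=
    fun s => Real.sqrt_pos.2 (by nlinarith [hGnn s, hε])
  have hφderiv : ∀ s ∈ Set.Ioo 0 T,
      HasDerivAt φ (1 / (2 * Real.sqrt (G s + ε ^ 2)) * D s - h s) s := by
    intro s hs
    have h1 : HasDerivAt (fun σ => G σ + ε ^ 2) (D s) s := (hG' s hs).add_const _
    have hneq : G s + ε ^ 2 ≠ 0 := by nlinarith [hGnn s, hε]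
    have h2 : HasDerivAt (fun σ => Real.sqrt (G σ + ε ^ 2))
        (1 / (2 * Real.sqrt (G s + ε ^ 2)) * D s) s :=
      (Real.hasDerivAt_sqrt hneq).comp s h1
    have h3 : HasDerivAt P (h s) s :=
      intervalIntegral.integral_hasDerivAt_right (hhint s ⟨hs.1.le, hs.2.le⟩)
        ⟨Set.Icc 0 T, Icc_mem_nhds hs.1 hs.2, hh.aestronglyMeasurable measurableSet_Icc⟩
        (hh.continuousAt (Icc_mem_nhds hs.1 hs.2))
    exact h2.sub h3
  have hanti : AntitoneOn φ (Set.Icc 0 T) := by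
    refine antitoneOn_of_deriv_nonpos (convex_Icc 0 T) ?_ ?_ ?_
    · exact (Real.continuous_sqrt.comp_continuousOn (hGc.add continuousOn_const)).sub hPcont
    · intro s hs
      rw [interior_Icc] at hs
      exact ((hφderiv s hs).differentiableAt).differentiableWithinAt
    · intro s hs
      rw [interior_Icc] at hs
      rw [(hφderiv s hs).deriv]
      have hDle : D s ≤ 2 * h s * Real.sqrt (G s) := hDb s hs
      have hs2 : Real.sqrt (G s) ≤ Real.sqrt (G s + ε ^ 2) :=
        Real.sqrt_le_sqrt (by nlinarith)
      have hhs : 0 ≤ h s := hhnn s ⟨hs.1.le, hs.2.le⟩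
      have hS := hSpos s
      rw [sub_nonpos, one_div_mul_eq_div, div_le_iff₀ (by positivity)]
      nlinarith
  have ht0 : (0:ℝ) ∈ Set.Icc 0 T := ⟨le_rfl, hT.le⟩
  have hmono := hanti ht0 ht ht.1
  have hφ0 : φ 0 = ε := by
    simp [hφdef, hPdef, hG0, intervalIntegral.integral_same, Real.sqrt_sq hε.le]
  have h2 : Real.sqrt (G t) ≤ Real.sqrt (G t + ε ^ 2) := Real.sqrt_le_sqrt (by nlinarith)
  have h3 : Real.sqrt (G t + ε ^ 2) - P t ≤ ε := le_trans hmono (le_of_eq hφ0)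
  have : Real.sqrt (G t) ≤ P t + ε := by linarith
  exact this

lemma lapC_zero (x : Ω) : lapC (fun _ => (0:ℂ)) x = 0 := by
  have h1 : ∀ j : Fin n, pd j (fun _ => (0:ℂ)) = fun _ => (0:ℂ) := by
    intro j; funext y; simp [pd]
  rw [lapC]
  refine Finset.sum_eq_zero fun j _ => ?_
  rw [h1 j, h1 j]

end helpers

set_option maxHeartbeats 2000000 in
/-- If `i ∂ₜv + Δv + q v = F` on `[0,T] × ℝⁿ`, with `|q| ≤ M`, `v, F` compactly
supported in `x`, `v(0,·) = 0` and `F(0,·) = 0`, then there is a constant `C`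
depending only on `T` and `M` such that for every `t ∈ [0,T]` and `η > 0`,
`‖∇v(t,·)‖_{L²} ≤ C (η ∫₀ᵀ ‖∂ₜF(s,·)‖_{L²} ds + η⁻¹ ∫₀ᵀ ‖F(s,·)‖_{L²} ds)`. -/
theorem stmt5 {n : ℕ} (hn : 1 ≤ n) (T : ℝ) (hT : 0 < T) (M : ℝ) :
    ∃ C : ℝ, ∀ (q : EuclideanSpace ℝ (Fin n) → ℝ), Continuous q →
      (∀ x, |q x| ≤ M) →
      ∀ (v F : ℝ × EuclideanSpace ℝ (Fin n) → ℂ),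
        ContDiff ℝ 2 v → ContDiff ℝ 2 F →
        ∀ (K : Set (EuclideanSpace ℝ (Fin n))), IsCompact K →
        (∀ t ∈ Set.Icc (0:ℝ) T, ∀ x ∉ K, v (t, x) = 0 ∧ F (t, x) = 0) →
        (∀ t ∈ Set.Icc (0:ℝ) T, ∀ x,
          Complex.I * deriv (fun s => v (s, x)) t + lapC (fun y => v (t, y)) x
            + (q x : ℂ) * v (t, x) = F (t, x)) →
        (∀ x, v (0, x) = 0) → (∀ x, F (0, x) = 0) →
        ∀ t ∈ Set.Icc (0:ℝ) T, ∀ η : ℝ, 0 < η →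
          gradL2norm (fun x => v (t, x))
            ≤ C * (η * (∫ s in (0:ℝ)..T,
                      L2norm (fun x => deriv (fun τ => F (τ, x)) s))
                 + η⁻¹ * ∫ s in (0:ℝ)..T, L2norm (fun x => F (s, x))) := by
  classical
  refine ⟨Real.sqrt (2 + max M 0 * T) / 2, ?_⟩
  intro q hq hqM v F hv hF K hK hsupp hPDE hv0 hF0 t ht η hη
  set M' := max M 0 with hM'def
  have hqM' : ∀ x, |q x| ≤ M' := fun x => (hqM x).trans (le_max_left _ _)
  have hM'nn : 0 ≤ M' := le_max_right _ _
  -- basic regularity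
  have hvd : Differentiable ℝ v := hv.differentiable two_ne_zero
  have hFd : Differentiable ℝ F := hF.differentiable two_ne_zero
  have hv1 : ContDiff ℝ 1 (fderiv ℝ v) := hv.fderiv_right (m := 1) (by norm_num)
  have hvdc : Continuous (fderiv ℝ v) := hv.continuous_fderiv two_ne_zero
  have hDDvc : Continuous (fderiv ℝ (fderiv ℝ v)) := hv1.continuous_fderiv one_ne_zero
  have hFdc : Continuous (fderiv ℝ F) := hF.continuous_fderiv two_ne_zero
  -- the curve s ↦ (s, x)
  have hcurve : ∀ (sₜ : ℝ) (x : EuclideanSpace ℝ (Fin n)),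
      HasDerivAt (fun s : ℝ => ((s, x) : ℝ × EuclideanSpace ℝ (Fin n)))
        ((1, 0) : ℝ × EuclideanSpace ℝ (Fin n)) sₜ :=
    fun sₜ x => (hasDerivAt_id sₜ).prodMk (hasDerivAt_const sₜ x)
  -- time derivatives
  set w : ℝ × EuclideanSpace ℝ (Fin n) → ℂ := fun p => fderiv ℝ v p (1, 0) with hwdef
  set Fw : ℝ × EuclideanSpace ℝ (Fin n) → ℂ := fun p => fderiv ℝ F p (1, 0) with hFwdef
  have hw_deriv : ∀ (tt : ℝ) (x : EuclideanSpace ℝ (Fin n)),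
      HasDerivAt (fun s => v (s, x)) (w (tt, x)) tt :=
    fun tt x => (hvd (tt, x)).hasFDerivAt.comp_hasDerivAt tt (hcurve tt x)
  have hFw_deriv : ∀ (tt : ℝ) (x : EuclideanSpace ℝ (Fin n)),
      HasDerivAt (fun s => F (s, x)) (Fw (tt, x)) tt :=
    fun tt x => (hFd (tt, x)).hasFDerivAt.comp_hasDerivAt tt (hcurve tt x)
  have hw_eq : ∀ (tt : ℝ) (x : EuclideanSpace ℝ (Fin n)),
      deriv (fun s => v (s, x)) tt = w (tt, x) := fun tt x => (hw_deriv tt x).deriv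
  have hFw_eq : ∀ (tt : ℝ) (x : EuclideanSpace ℝ (Fin n)),
      deriv (fun s => F (s, x)) tt = Fw (tt, x) := fun tt x => (hFw_deriv tt x).deriv
  have hw_cont : Continuous w := hvdc.clm_apply continuous_const
  have hFw_cont : Continuous Fw := hFdc.clm_apply continuous_const
  have hw_cd : ContDiff ℝ 1 w := hv1.clm_apply contDiff_const
  -- second time derivative of v
  set w₂ : ℝ × EuclideanSpace ℝ (Fin n) → ℂ :=
    fun p => fderiv ℝ (fderiv ℝ v) p (1, 0) (1, 0) with hw₂def
  have hw₂_deriv : ∀ (tt : ℝ) (x : EuclideanSpace ℝ (Fin n)),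
      HasDerivAt (fun s => w (s, x)) (w₂ (tt, x)) tt := by
    intro tt x
    have h1 : HasDerivAt (fun s => fderiv ℝ v (s, x)) (fderiv ℝ (fderiv ℝ v) (tt, x) (1, 0)) tt :=
      (hv1.differentiable one_ne_zero (tt, x)).hasFDerivAt.comp_hasDerivAt tt (hcurve tt x)
    exact (ContinuousLinearMap.apply ℝ ℂ
      (((1:ℝ), (0 : EuclideanSpace ℝ (Fin n))))).hasFDerivAt.comp_hasDerivAt tt h1
  have hw₂_cont : Continuous w₂ := (hDDvc.clm_apply continuous_const).clm_apply continuous_const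
  -- spatial derivative fields
  set Z : Fin n → ℝ × EuclideanSpace ℝ (Fin n) → ℂ :=
    fun j p => fderiv ℝ v p (0, EuclideanSpace.single j 1) with hZdef
  set Y : Fin n → ℝ × EuclideanSpace ℝ (Fin n) → ℂ :=
    fun j p => fderiv ℝ (fderiv ℝ v) p (0, EuclideanSpace.single j 1)
      (0, EuclideanSpace.single j 1) with hYdef
  set X : Fin n → ℝ × EuclideanSpace ℝ (Fin n) → ℂ :=
    fun j p => fderiv ℝ (fderiv ℝ v) p (1, 0) (0, EuclideanSpace.single j 1) with hXdef
  have hZ_cont : ∀ j, Continuous (Z j) := fun j => hvdc.clm_apply continuous_const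
  have hY_cont : ∀ j, Continuous (Y j) :=
    fun j => (hDDvc.clm_apply continuous_const).clm_apply continuous_const
  have hX_cont : ∀ j, Continuous (X j) :=
    fun j => (hDDvc.clm_apply continuous_const).clm_apply continuous_const
  -- the inclusion y ↦ (t, y)
  have hmk : ∀ (tt : ℝ) (x : EuclideanSpace ℝ (Fin n)),
      HasFDerivAt (fun y : EuclideanSpace ℝ (Fin n) => ((tt, y) : ℝ × EuclideanSpace ℝ (Fin n)))
        (((0 : EuclideanSpace ℝ (Fin n) →L[ℝ] ℝ)).prod
          (ContinuousLinearMap.id ℝ (EuclideanSpace ℝ (Fin n)))) x :=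
    fun tt x => (hasFDerivAt_const tt x).prodMk (hasFDerivAt_id x)
  -- chain-rule identities for spatial derivatives
  have hVt2 : ∀ tt : ℝ, ContDiff ℝ 2 (fun y => v (tt, y)) :=
    fun tt => hv.comp (contDiff_prodMk_right tt)
  have hFt2 : ∀ tt : ℝ, ContDiff ℝ 2 (fun y => F (tt, y)) :=
    fun tt => hF.comp (contDiff_prodMk_right tt)
  have hWt1 : ∀ tt : ℝ, ContDiff ℝ 1 (fun y => w (tt, y)) :=
    fun tt => hw_cd.comp (contDiff_prodMk_right tt)
  have hpd_eq : ∀ (tt : ℝ) (x : EuclideanSpace ℝ (Fin n)) (j : Fin n),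
      pd j (fun y => v (tt, y)) x = Z j (tt, x) := by
    intro tt x j
    have h : HasFDerivAt (fun y => v (tt, y))
        ((fderiv ℝ v (tt, x)).comp
          (((0 : EuclideanSpace ℝ (Fin n) →L[ℝ] ℝ)).prod
            (ContinuousLinearMap.id ℝ (EuclideanSpace ℝ (Fin n))))) x :=
      (hvd (tt, x)).hasFDerivAt.comp x (hmk tt x)
    rw [pd, h.fderiv]
    simp [hZdef]
  have hpdW_eq : ∀ (tt : ℝ) (x : EuclideanSpace ℝ (Fin n)) (j : Fin n),
      pd j (fun y => w (tt, y)) x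
        = fderiv ℝ (fderiv ℝ v) (tt, x) (0, EuclideanSpace.single j 1) (1, 0) := by
    intro tt x j
    have h1 : HasFDerivAt (fun y => fderiv ℝ v (tt, y))
        ((fderiv ℝ (fderiv ℝ v) (tt, x)).comp
          (((0 : EuclideanSpace ℝ (Fin n) →L[ℝ] ℝ)).prod
            (ContinuousLinearMap.id ℝ (EuclideanSpace ℝ (Fin n))))) x :=
      (hv1.differentiable one_ne_zero (tt, x)).hasFDerivAt.comp x (hmk tt x)
    have h2 : HasFDerivAt (fun y => w (tt, y))
        ((ContinuousLinearMap.apply ℝ ℂ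
          (((1:ℝ), (0 : EuclideanSpace ℝ (Fin n))))).comp
          ((fderiv ℝ (fderiv ℝ v) (tt, x)).comp
            (((0 : EuclideanSpace ℝ (Fin n) →L[ℝ] ℝ)).prod
              (ContinuousLinearMap.id ℝ (EuclideanSpace ℝ (Fin n)))))) x :=
      (ContinuousLinearMap.apply ℝ ℂ
        (((1:ℝ), (0 : EuclideanSpace ℝ (Fin n))))).hasFDerivAt.comp x h1
    rw [pd, h2.fderiv]
    simp
  have hpd2_eq : ∀ (tt : ℝ) (x : EuclideanSpace ℝ (Fin n)) (j : Fin n),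
      pd j (pd j (fun y => v (tt, y))) x = Y j (tt, x) := by
    intro tt x j
    have hfun : pd j (fun y => v (tt, y)) = fun y => Z j (tt, y) :=
      funext fun y => hpd_eq tt y j
    rw [hfun]
    have h1 : HasFDerivAt (fun y => fderiv ℝ v (tt, y))
        ((fderiv ℝ (fderiv ℝ v) (tt, x)).comp
          (((0 : EuclideanSpace ℝ (Fin n) →L[ℝ] ℝ)).prod
            (ContinuousLinearMap.id ℝ (EuclideanSpace ℝ (Fin n))))) x :=
      (hv1.differentiable one_ne_zero (tt, x)).hasFDerivAt.comp x (hmk tt x)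
    have h2 : HasFDerivAt (fun y => Z j (tt, y))
        ((ContinuousLinearMap.apply ℝ ℂ
          (((0 : ℝ), EuclideanSpace.single j 1) : ℝ × EuclideanSpace ℝ (Fin n))).comp
          ((fderiv ℝ (fderiv ℝ v) (tt, x)).comp
            (((0 : EuclideanSpace ℝ (Fin n) →L[ℝ] ℝ)).prod
              (ContinuousLinearMap.id ℝ (EuclideanSpace ℝ (Fin n)))))) x :=
      (ContinuousLinearMap.apply ℝ ℂ
        (((0 : ℝ), EuclideanSpace.single j 1)
          : ℝ × EuclideanSpace ℝ (Fin n))).hasFDerivAt.comp x h1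
    rw [pd, h2.fderiv]
    simp [hYdef]
  -- symmetry of second derivatives
  have hsymm : ∀ (p : ℝ × EuclideanSpace ℝ (Fin n)) (a b : ℝ × EuclideanSpace ℝ (Fin n)),
      fderiv ℝ (fderiv ℝ v) p a b = fderiv ℝ (fderiv ℝ v) p b a :=
    fun p => second_derivative_symmetric (fun y => (hvd y).hasFDerivAt)
      ((hv1.differentiable one_ne_zero p).hasFDerivAt)
  have hX_pdW : ∀ (tt : ℝ) (x : EuclideanSpace ℝ (Fin n)) (j : Fin n),
      X j (tt, x) = pd j (fun y => w (tt, y)) x := by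
    intro tt x j
    rw [hpdW_eq tt x j, hXdef]
    exact hsymm (tt, x) _ _
  have hZ_deriv : ∀ (tt : ℝ) (x : EuclideanSpace ℝ (Fin n)) (j : Fin n),
      HasDerivAt (fun s => Z j (s, x)) (X j (tt, x)) tt := by
    intro tt x j
    have h1 : HasDerivAt (fun s => fderiv ℝ v (s, x)) (fderiv ℝ (fderiv ℝ v) (tt, x) (1, 0)) tt :=
      (hv1.differentiable one_ne_zero (tt, x)).hasFDerivAt.comp_hasDerivAt tt (hcurve tt x)
    exact (ContinuousLinearMap.apply ℝ ℂ
      (((0 : ℝ), EuclideanSpace.single j 1)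
        : ℝ × EuclideanSpace ℝ (Fin n))).hasFDerivAt.comp_hasDerivAt tt h1
  have hlap_eq : ∀ (tt : ℝ) (x : EuclideanSpace ℝ (Fin n)),
      lapC (fun y => v (tt, y)) x = ∑ j, Y j (tt, x) := by
    intro tt x
    rw [lapC]
    exact Finset.sum_congr rfl fun j _ => hpd2_eq tt x j
  -- support lemmas
  have sv : ∀ s ∈ Set.Icc (0:ℝ) T, ∀ x ∉ K, v (s, x) = 0 := fun s hs x hx => (hsupp s hs x hx).1
  have sF : ∀ s ∈ Set.Icc (0:ℝ) T, ∀ x ∉ K, F (s, x) = 0 := fun s hs x hx => (hsupp s hs x hx).2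
  have sw : ∀ s ∈ Set.Icc (0:ℝ) T, ∀ x ∉ K, w (s, x) = 0 := by
    intro s hs x hx
    rw [← hw_eq s x]
    exact deriv_eq_zero_of_eqOn_zero' hT hs (hw_deriv s x).differentiableAt
      (fun σ hσ => sv σ hσ x hx)
  have sFw : ∀ s ∈ Set.Icc (0:ℝ) T, ∀ x ∉ K, Fw (s, x) = 0 := by
    intro s hs x hx
    rw [← hFw_eq s x]
    exact deriv_eq_zero_of_eqOn_zero' hT hs (hFw_deriv s x).differentiableAt
      (fun σ hσ => sF σ hσ x hx)
  have sw₂ : ∀ s ∈ Set.Icc (0:ℝ) T, ∀ x ∉ K, w₂ (s, x) = 0 := by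
    intro s hs x hx
    rw [← (hw₂_deriv s x).deriv]
    exact deriv_eq_zero_of_eqOn_zero' hT hs (hw₂_deriv s x).differentiableAt
      (fun σ hσ => sw σ hσ x hx)
  have sZ : ∀ (j : Fin n), ∀ s ∈ Set.Icc (0:ℝ) T, ∀ x ∉ K, Z j (s, x) = 0 := by
    intro j s hs x hx
    rw [← hpd_eq s x j]
    exact pd_zero_outside hK.isClosed (fun y hy => sv s hs y hy) hx j
  have sY : ∀ (j : Fin n), ∀ s ∈ Set.Icc (0:ℝ) T, ∀ x ∉ K, Y j (s, x) = 0 := by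
    intro j s hs x hx
    rw [← hpd2_eq s x j]
    refine pd_zero_outside hK.isClosed ?_ hx j
    intro y hy
    exact pd_zero_outside hK.isClosed (fun z hz => sv s hs z hz) hy j
  have sX : ∀ (j : Fin n), ∀ s ∈ Set.Icc (0:ℝ) T, ∀ x ∉ K, X j (s, x) = 0 := by
    intro j s hs x hx
    rw [hX_pdW s x j]
    exact pd_zero_outside hK.isClosed (fun y hy => sw s hs y hy) hx j
  -- PDE, rewritten with w
  have hPDEw : ∀ s ∈ Set.Icc (0:ℝ) T, ∀ x,
      Complex.I * w (s, x) + lapC (fun y => v (s, y)) x + (q x : ℂ) * v (s, x) = F (s, x) := by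
    intro s hs x; rw [← hw_eq s x]; exact hPDE s hs x
  have hII : Complex.I * -Complex.I = 1 := by
    rw [mul_neg, Complex.I_mul_I, neg_neg]
  have hw_pde : ∀ s ∈ Set.Icc (0:ℝ) T, ∀ x,
      w (s, x) = -Complex.I *
        (F (s, x) - lapC (fun y => v (s, y)) x - (q x : ℂ) * v (s, x)) := by
    intro s hs x
    have h2 : Complex.I * w (s, x)
        = F (s, x) - lapC (fun y => v (s, y)) x - (q x : ℂ) * v (s, x) := by
      linear_combination hPDEw s hs x
    apply mul_left_cancel₀ Complex.I_ne_zero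
    rw [h2, ← mul_assoc, hII, one_mul]
  -- w vanishes at time 0
  have h0w : ∀ x, w (0, x) = 0 := by
    intro x
    have h := hPDEw 0 ⟨le_rfl, hT.le⟩ x
    have hlap0 : lapC (fun y => v (0, y)) x = 0 := by
      have hfun : (fun y => v (0, y)) = fun _ => (0:ℂ) := funext hv0
      rw [hfun]; exact lapC_zero x
    rw [hlap0, hv0 x, hF0 x] at h
    simpa [Complex.I_ne_zero] using h
  -- the two controlling functions
  set hA : ℝ → ℝ := fun s => Real.sqrt (∫ x, ‖Fw (s, x)‖ ^ 2) with hAdef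
  set hB : ℝ → ℝ := fun s => Real.sqrt (∫ x, ‖F (s, x)‖ ^ 2) with hBdef
  have hAcont : ContinuousOn hA (Set.Icc 0 T) := by
    refine Real.continuous_sqrt.comp_continuousOn
      (contOn_param hK (f := fun p => ‖Fw p‖ ^ 2) (by fun_prop) ?_)
    intro s hs x hx; show ‖Fw (s, x)‖ ^ 2 = 0; rw [sFw s hs x hx]; simp
  have hBcont : ContinuousOn hB (Set.Icc 0 T) := by
    refine Real.continuous_sqrt.comp_continuousOn
      (contOn_param hK (f := fun p => ‖F p‖ ^ 2) (by fun_prop) ?_)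
    intro s hs x hx; show ‖F (s, x)‖ ^ 2 = 0; rw [sF s hs x hx]; simp
  have hAnn : ∀ s, 0 ≤ hA s := fun s => Real.sqrt_nonneg _
  have hBnn : ∀ s, 0 ≤ hB s := fun s => Real.sqrt_nonneg _
  -- pairing of Laplacian against a test function
  have pairing : ∀ s ∈ Set.Icc (0:ℝ) T, ∀ (g : EuclideanSpace ℝ (Fin n) → ℂ),
      ContDiff ℝ 1 g → (∀ x ∉ K, g x = 0) →
      ∫ x, lapC (fun y => v (s, y)) x * (starRingEnd ℂ) (g x)
        = -∑ j, ∫ x, pd j (fun y => v (s, y)) x * (starRingEnd ℂ) (pd j g x) :=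
    fun s hs g hg hg0 => lap_pairing hK (hVt2 s) hg (fun x hx => sv s hs x hx) hg0
  -- a little helper for real-valued integrals of `z * conj z`
  have mulconj : ∀ (f : EuclideanSpace ℝ (Fin n) → ℂ), Continuous f → (∀ x ∉ K, f x = 0) →
      ∫ x, f x * (starRingEnd ℂ) (f x) = ((∫ x, ‖f x‖ ^ 2 : ℝ) : ℂ) := by
    intro f hf hf0
    have hfun : (fun x => f x * (starRingEnd ℂ) (f x)) = fun x => ((‖f x‖ ^ 2 : ℝ) : ℂ) := by
      funext x
      rw [Complex.mul_conj, Complex.normSq_eq_norm_sq]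
    rw [hfun]
    exact integral_ofReal
  -- energy estimate (a) : for F itself
  have estA : ∀ s ∈ Set.Icc (0:ℝ) T,
      Real.sqrt (∫ x, ‖F (s, x)‖ ^ 2) ≤ ∫ σ in (0:ℝ)..s, hA σ := by
    refine energy_est hK hT hF.continuous hFw_cont (fun s hs x => hFw_deriv s x) sF
      (fun s hs x hx => sFw s (Set.mem_Icc_of_Ioo hs) x hx) hF0 hAcont (fun s _ => hAnn s) ?_
    intro s hs
    have hsI : s ∈ Set.Icc (0:ℝ) T := Set.mem_Icc_of_Ioo hs
    have hint1 : Integrable fun x => (Fw (s, x) * (starRingEnd ℂ) (F (s, x))).re := by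
      refine integrable_of_supp hK (by fun_prop) ?_
      intro x hx; show (Fw (s, x) * (starRingEnd ℂ) (F (s, x))).re = 0
      rw [sFw s hsI x hx, zero_mul]; simp
    have hint2 : Integrable fun x => ‖Fw (s, x)‖ * ‖F (s, x)‖ := by
      refine integrable_of_supp hK (by fun_prop) ?_
      intro x hx; show ‖Fw (s, x)‖ * ‖F (s, x)‖ = 0
      rw [sFw s hsI x hx]; simp
    calc ∫ x, (Fw (s, x) * (starRingEnd ℂ) (F (s, x))).re
        ≤ ∫ x, ‖Fw (s, x)‖ * ‖F (s, x)‖ := by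
          refine integral_mono hint1 hint2 fun x => ?_
          calc (Fw (s, x) * (starRingEnd ℂ) (F (s, x))).re
              ≤ ‖Fw (s, x) * (starRingEnd ℂ) (F (s, x))‖ := Complex.re_le_norm _
            _ = ‖Fw (s, x)‖ * ‖F (s, x)‖ := by rw [norm_mul, RCLike.norm_conj]
      _ ≤ Real.sqrt (∫ x, ‖Fw (s, x)‖ ^ 2) * Real.sqrt (∫ x, ‖F (s, x)‖ ^ 2) :=
          integral_norm_mul_le hK (by fun_prop) (by fun_prop)
            (fun x hx => sFw s hsI x hx) (fun x hx => sF s hsI x hx)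
      _ = hA s * Real.sqrt (∫ x, ‖F (s, x)‖ ^ 2) := rfl
  -- energy estimate (b) : for v
  have estB : ∀ s ∈ Set.Icc (0:ℝ) T,
      Real.sqrt (∫ x, ‖v (s, x)‖ ^ 2) ≤ ∫ σ in (0:ℝ)..s, hB σ := by
    refine energy_est hK hT hv.continuous hw_cont (fun s hs x => hw_deriv s x) sv
      (fun s hs x hx => sw s (Set.mem_Icc_of_Ioo hs) x hx) hv0 hBcont (fun s _ => hBnn s) ?_
    intro s hs
    have hsI : s ∈ Set.Icc (0:ℝ) T := Set.mem_Icc_of_Ioo hs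
    have cvs : Continuous fun x => v (s, x) :=
      hv.continuous.comp (continuous_const.prodMk continuous_id)
    have cFs : Continuous fun x => F (s, x) :=
      hF.continuous.comp (continuous_const.prodMk continuous_id)
    have cconjv : Continuous fun x => (starRingEnd ℂ) (v (s, x)) :=
      Complex.continuous_conj.comp cvs
    have hlapc : Continuous fun x => lapC (fun y => v (s, y)) x := by
      have : (fun x => lapC (fun y => v (s, y)) x) = fun x => ∑ j, Y j (s, x) :=
        funext fun x => hlap_eq s x
      rw [this]
      exact continuous_finset_sum _ fun j _ =>
        (hY_cont j).comp (continuous_const.prodMk continuous_id)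
    have hlaps : ∀ x ∉ K, lapC (fun y => v (s, y)) x = 0 := by
      intro x hx
      rw [hlap_eq s x]
      exact Finset.sum_eq_zero fun j _ => sY j s hsI x hx
    -- pointwise: re (w conj v) = im ((F - lap - q v) conj v)
    have hptw : ∀ x, (w (s, x) * (starRingEnd ℂ) (v (s, x))).re
        = (((F (s, x) - lapC (fun y => v (s, y)) x - (q x : ℂ) * v (s, x)))
            * (starRingEnd ℂ) (v (s, x))).im := by
      intro x
      rw [hw_pde s hsI x]
      set z := (F (s, x) - lapC (fun y => v (s, y)) x - (q x : ℂ) * v (s, x))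
        * (starRingEnd ℂ) (v (s, x)) with hz
      have : -Complex.I * (F (s, x) - lapC (fun y => v (s, y)) x - (q x : ℂ) * v (s, x))
          * (starRingEnd ℂ) (v (s, x)) = -Complex.I * z := by rw [hz]; ring
      rw [this]
      simp [Complex.mul_re]
    -- integrabilities
    have intF : Integrable fun x => F (s, x) * (starRingEnd ℂ) (v (s, x)) := by
      refine integrable_of_supp hK (cFs.mul cconjv) fun x hx => ?_
      show F (s, x) * (starRingEnd ℂ) (v (s, x)) = 0
      rw [sF s hsI x hx, zero_mul]
    have intLap : Integrable fun x => lapC (fun y => v (s, y)) x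
        * (starRingEnd ℂ) (v (s, x)) := by
      refine integrable_of_supp hK (hlapc.mul cconjv) fun x hx => ?_
      show lapC (fun y => v (s, y)) x * (starRingEnd ℂ) (v (s, x)) = 0
      rw [hlaps x hx, zero_mul]
    have intQ : Integrable fun x => (q x : ℂ) * v (s, x) * (starRingEnd ℂ) (v (s, x)) := by
      refine integrable_of_supp hK
        (((Complex.continuous_ofReal.comp hq).mul cvs).mul cconjv) fun x hx => ?_
      show (q x : ℂ) * v (s, x) * (starRingEnd ℂ) (v (s, x)) = 0
      rw [sv s hsI x hx, mul_zero, zero_mul]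
    have intAll : Integrable fun x =>
        (F (s, x) - lapC (fun y => v (s, y)) x - (q x : ℂ) * v (s, x))
          * (starRingEnd ℂ) (v (s, x)) := by
      have : (fun x => (F (s, x) - lapC (fun y => v (s, y)) x - (q x : ℂ) * v (s, x))
          * (starRingEnd ℂ) (v (s, x)))
          = fun x => F (s, x) * (starRingEnd ℂ) (v (s, x))
            - lapC (fun y => v (s, y)) x * (starRingEnd ℂ) (v (s, x))
            - (q x : ℂ) * v (s, x) * (starRingEnd ℂ) (v (s, x)) := by
        funext x; ring
      rw [this]; exact (intF.sub intLap).sub intQ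
    -- the imaginary parts of the lap and q terms vanish
    have hlapIm : (∫ x, lapC (fun y => v (s, y)) x * (starRingEnd ℂ) (v (s, x))).im = 0 := by
      rw [pairing s hsI _ ((hVt2 s).of_le one_le_two) (fun x hx => sv s hsI x hx)]
      have hz : ∀ j : Fin n, ∫ x, pd j (fun y => v (s, y)) x
          * (starRingEnd ℂ) (pd j (fun y => v (s, y)) x)
          = ((∫ x, ‖pd j (fun y => v (s, y)) x‖ ^ 2 : ℝ) : ℂ) := by
        intro j
        exact mulconj _ (pd_continuous j ((hVt2 s).of_le one_le_two))
          (fun x hx => pd_zero_outside hK.isClosed (fun y hy => sv s hsI y hy) hx j)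
      have h4 : (∑ j, ∫ x, pd j (fun y => v (s, y)) x
          * (starRingEnd ℂ) (pd j (fun y => v (s, y)) x))
          = ((∑ j, ∫ x, ‖pd j (fun y => v (s, y)) x‖ ^ 2 : ℝ) : ℂ) := by
        rw [Finset.sum_congr rfl fun j _ => hz j]
        push_cast; ring
      rw [h4]
      simp
    have hqIm : (∫ x, (q x : ℂ) * v (s, x) * (starRingEnd ℂ) (v (s, x))).im = 0 := by
      have : (fun x => (q x : ℂ) * v (s, x) * (starRingEnd ℂ) (v (s, x)))
          = fun x => ((q x * ‖v (s, x)‖ ^ 2 : ℝ) : ℂ) := by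
        funext x
        rw [mul_assoc, Complex.mul_conj, Complex.normSq_eq_norm_sq]
        push_cast; ring
      rw [this]
      have h2 : (∫ x, ((q x * ‖v (s, x)‖ ^ 2 : ℝ) : ℂ))
          = ((∫ x, q x * ‖v (s, x)‖ ^ 2 : ℝ) : ℂ) := integral_ofReal
      rw [h2, Complex.ofReal_im]
    -- put it together
    calc ∫ x, (w (s, x) * (starRingEnd ℂ) (v (s, x))).re
        = ∫ x, (((F (s, x) - lapC (fun y => v (s, y)) x - (q x : ℂ) * v (s, x)))
            * (starRingEnd ℂ) (v (s, x))).im := by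
          exact integral_congr_ae (Filter.Eventually.of_forall hptw)
      _ = (∫ x, ((F (s, x) - lapC (fun y => v (s, y)) x - (q x : ℂ) * v (s, x)))
            * (starRingEnd ℂ) (v (s, x))).im := by
          simpa using integral_im intAll
      _ = (∫ x, F (s, x) * (starRingEnd ℂ) (v (s, x))).im := by
          have hfun : (fun x => (F (s, x) - lapC (fun y => v (s, y)) x
              - (q x : ℂ) * v (s, x)) * (starRingEnd ℂ) (v (s, x)))
              = fun x => F (s, x) * (starRingEnd ℂ) (v (s, x))
                - lapC (fun y => v (s, y)) x * (starRingEnd ℂ) (v (s, x))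
                - (q x : ℂ) * v (s, x) * (starRingEnd ℂ) (v (s, x)) := by
            funext x; ring
          have intFL : Integrable fun x => F (s, x) * (starRingEnd ℂ) (v (s, x))
              - lapC (fun y => v (s, y)) x * (starRingEnd ℂ) (v (s, x)) := intF.sub intLap
          rw [hfun, integral_sub intFL intQ, integral_sub intF intLap,
            Complex.sub_im, Complex.sub_im, hlapIm, hqIm]
          ring
      _ ≤ ‖∫ x, F (s, x) * (starRingEnd ℂ) (v (s, x))‖ :=
          le_trans (le_abs_self _) (Complex.abs_im_le_norm _)
      _ ≤ Real.sqrt (∫ x, ‖F (s, x)‖ ^ 2) * Real.sqrt (∫ x, ‖v (s, x)‖ ^ 2) :=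
          integral_cs hK cFs cvs (fun x hx => sF s hsI x hx)
            (fun x hx => sv s hsI x hx)
      _ = hB s * Real.sqrt (∫ x, ‖v (s, x)‖ ^ 2) := rfl
  -- energy estimate (c) : for w = time derivative of v
  set D : ℝ × EuclideanSpace ℝ (Fin n) → ℂ :=
    fun p => Fw p - (q p.2 : ℂ) * w p - Complex.I * w₂ p with hDdef
  have hD_cont : Continuous D :=
    (hFw_cont.sub ((Complex.continuous_ofReal.comp (hq.comp continuous_snd)).mul hw_cont)).sub
      (continuous_const.mul hw₂_cont)
  have sD : ∀ s ∈ Set.Icc (0:ℝ) T, ∀ x ∉ K, D (s, x) = 0 := by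
    intro s hs x hx
    show Fw (s, x) - (q x : ℂ) * w (s, x) - Complex.I * w₂ (s, x) = 0
    rw [sFw s hs x hx, sw s hs x hx, sw₂ s hs x hx]
    simp
  have estC : ∀ s ∈ Set.Icc (0:ℝ) T,
      Real.sqrt (∫ x, ‖w (s, x)‖ ^ 2) ≤ ∫ σ in (0:ℝ)..s, hA σ := by
    refine energy_est hK hT hw_cont hw₂_cont (fun s hs x => hw₂_deriv s x) sw
      (fun s hs x hx => sw₂ s (Set.mem_Icc_of_Ioo hs) x hx) h0w hAcont (fun s _ => hAnn s) ?_
    intro s hs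
    have hsI : s ∈ Set.Icc (0:ℝ) T := Set.mem_Icc_of_Ioo hs
    have cws : Continuous fun x => w (s, x) :=
      hw_cont.comp (continuous_const.prodMk continuous_id)
    have cconjw : Continuous fun x => (starRingEnd ℂ) (w (s, x)) :=
      Complex.continuous_conj.comp cws
    have cFws : Continuous fun x => Fw (s, x) :=
      hFw_cont.comp (continuous_const.prodMk continuous_id)
    have cDs : Continuous fun x => D (s, x) :=
      hD_cont.comp (continuous_const.prodMk continuous_id)
    -- the time derivative of the (spatial) Laplacian of v is D, near interior times
    have hLap_deriv : ∀ σ ∈ Set.Ioo (0:ℝ) T, ∀ x,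
        HasDerivAt (fun τ => ∑ j, Y j (τ, x)) (D (σ, x)) σ := by
      intro σ hσ x
      have h1 : HasDerivAt
          (fun τ => F (τ, x) - (q x : ℂ) * v (τ, x) - Complex.I * w (τ, x)) (D (σ, x)) σ := by
        have h2 := ((hFw_deriv σ x).sub ((hw_deriv σ x).const_mul ((q x : ℂ)))).sub
          ((hw₂_deriv σ x).const_mul Complex.I)
        exact h2
      refine h1.congr_of_eventuallyEq ?_
      filter_upwards [isOpen_Ioo.mem_nhds hσ] with τ hτ
      have hp := hPDEw τ (Set.mem_Icc_of_Ioo hτ) x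
      rw [← hlap_eq τ x]
      linear_combination hp
    -- Φ : pairing of the Laplacian with w (s, ·), as a function of time
    have hΦ : HasDerivAt (fun τ => ∫ x, (∑ j, Y j (τ, x)) * (starRingEnd ℂ) (w (s, x)))
        (∫ x, D (s, x) * (starRingEnd ℂ) (w (s, x))) s := by
      refine hasDerivAt_param hK hs
        (f := fun p => (∑ j, Y j p) * (starRingEnd ℂ) (w (s, p.2)))
        (f' := fun p => D p * (starRingEnd ℂ) (w (s, p.2))) ?_ ?_ ?_ ?_ ?_
      · exact (continuous_finset_sum _ fun j _ => hY_cont j).mul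
          (Complex.continuous_conj.comp (hw_cont.comp (continuous_const.prodMk continuous_snd)))
      · exact hD_cont.mul
          (Complex.continuous_conj.comp (hw_cont.comp (continuous_const.prodMk continuous_snd)))
      · exact fun σ hσ x => (hLap_deriv σ hσ x).mul_const ((starRingEnd ℂ) (w (s, x)))
      · intro σ hσ x hx
        show (∑ j, Y j (σ, x)) * (starRingEnd ℂ) (w (s, x)) = 0
        rw [Finset.sum_eq_zero fun j _ => sY j σ (Set.mem_Icc_of_Ioo hσ) x hx, zero_mul]
      · intro σ hσ x hx
        show D (σ, x) * (starRingEnd ℂ) (w (s, x)) = 0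
        rw [sD σ (Set.mem_Icc_of_Ioo hσ) x hx, zero_mul]
    -- Ψ : pairing of the gradients
    have hΨ : HasDerivAt (fun τ => -∑ j, ∫ x, Z j (τ, x) * (starRingEnd ℂ) (X j (s, x)))
        (-∑ j, ∫ x, X j (s, x) * (starRingEnd ℂ) (X j (s, x))) s := by
      refine HasDerivAt.neg (HasDerivAt.fun_sum fun j _ => ?_)
      refine hasDerivAt_param hK hs
        (f := fun p => Z j p * (starRingEnd ℂ) (X j (s, p.2)))
        (f' := fun p => X j p * (starRingEnd ℂ) (X j (s, p.2))) ?_ ?_ ?_ ?_ ?_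
      · exact (hZ_cont j).mul (Complex.continuous_conj.comp
          ((hX_cont j).comp (continuous_const.prodMk continuous_snd)))
      · exact (hX_cont j).mul (Complex.continuous_conj.comp
          ((hX_cont j).comp (continuous_const.prodMk continuous_snd)))
      · exact fun σ hσ x => (hZ_deriv σ x j).mul_const ((starRingEnd ℂ) (X j (s, x)))
      · intro σ hσ x hx
        show Z j (σ, x) * (starRingEnd ℂ) (X j (s, x)) = 0
        rw [sZ j σ (Set.mem_Icc_of_Ioo hσ) x hx, zero_mul]
      · intro σ hσ x hx
        show X j (σ, x) * (starRingEnd ℂ) (X j (s, x)) = 0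
        rw [sX j σ (Set.mem_Icc_of_Ioo hσ) x hx, zero_mul]
    -- Φ and Ψ agree near s (integration by parts)
    have hΦΨ : (fun τ => -∑ j, ∫ x, Z j (τ, x) * (starRingEnd ℂ) (X j (s, x)))
        =ᶠ[nhds s] (fun τ => ∫ x, (∑ j, Y j (τ, x)) * (starRingEnd ℂ) (w (s, x))) := by
      filter_upwards [isOpen_Ioo.mem_nhds hs] with τ hτ
      have hτI : τ ∈ Set.Icc (0:ℝ) T := Set.mem_Icc_of_Ioo hτ
      have e1 : ∫ x, (∑ j, Y j (τ, x)) * (starRingEnd ℂ) (w (s, x))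
          = ∫ x, lapC (fun y => v (τ, y)) x * (starRingEnd ℂ) (w (s, x)) := by
        congr 1; funext x; rw [hlap_eq τ x]
      have e2 := pairing τ hτI (fun y => w (s, y)) (hWt1 s) (fun x hx => sw s hsI x hx)
      have e3 : ∀ j : Fin n, ∫ x, pd j (fun y => v (τ, y)) x
            * (starRingEnd ℂ) (pd j (fun y => w (s, y)) x)
          = ∫ x, Z j (τ, x) * (starRingEnd ℂ) (X j (s, x)) := by
        intro j; congr 1; funext x; rw [hpd_eq τ x j, hX_pdW s x j]
      rw [e1, e2]
      rw [Finset.sum_congr rfl fun j _ => e3 j]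
    -- hence the two derivatives coincide
    have hkey : ∫ x, D (s, x) * (starRingEnd ℂ) (w (s, x))
        = -∑ j, ∫ x, X j (s, x) * (starRingEnd ℂ) (X j (s, x)) :=
      (hΦ.congr_of_eventuallyEq hΦΨ).unique hΨ
    have hDIm : (∫ x, D (s, x) * (starRingEnd ℂ) (w (s, x))).im = 0 := by
      rw [hkey]
      have hz : ∀ j : Fin n, ∫ x, X j (s, x) * (starRingEnd ℂ) (X j (s, x))
          = ((∫ x, ‖X j (s, x)‖ ^ 2 : ℝ) : ℂ) := fun j =>
        mulconj _ ((hX_cont j).comp (continuous_const.prodMk continuous_id))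
          (fun x hx => sX j s hsI x hx)
      have h4 : (∑ j, ∫ x, X j (s, x) * (starRingEnd ℂ) (X j (s, x)))
          = ((∑ j, ∫ x, ‖X j (s, x)‖ ^ 2 : ℝ) : ℂ) := by
        rw [Finset.sum_congr rfl fun j _ => hz j]
        push_cast; ring
      rw [h4]
      simp
    -- pointwise identity for the real part
    have hptw : ∀ x, (w₂ (s, x) * (starRingEnd ℂ) (w (s, x))).re
        = ((Fw (s, x) - D (s, x) - (q x : ℂ) * w (s, x))
            * (starRingEnd ℂ) (w (s, x))).im := by
      intro x
      have hid : Fw (s, x) - D (s, x) - (q x : ℂ) * w (s, x) = Complex.I * w₂ (s, x) := by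
        show Fw (s, x) - (Fw (s, x) - (q x : ℂ) * w (s, x) - Complex.I * w₂ (s, x))
          - (q x : ℂ) * w (s, x) = Complex.I * w₂ (s, x)
        ring
      rw [hid]
      simp [Complex.mul_im, Complex.mul_re]
      ring
    -- integrabilities
    have intFw : Integrable fun x => Fw (s, x) * (starRingEnd ℂ) (w (s, x)) := by
      refine integrable_of_supp hK (cFws.mul cconjw) fun x hx => ?_
      show Fw (s, x) * (starRingEnd ℂ) (w (s, x)) = 0
      rw [sFw s hsI x hx, zero_mul]
    have intD : Integrable fun x => D (s, x) * (starRingEnd ℂ) (w (s, x)) := by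
      refine integrable_of_supp hK (cDs.mul cconjw) fun x hx => ?_
      show D (s, x) * (starRingEnd ℂ) (w (s, x)) = 0
      rw [sD s hsI x hx, zero_mul]
    have intQw : Integrable fun x => (q x : ℂ) * w (s, x) * (starRingEnd ℂ) (w (s, x)) := by
      refine integrable_of_supp hK
        (((Complex.continuous_ofReal.comp hq).mul cws).mul cconjw) fun x hx => ?_
      show (q x : ℂ) * w (s, x) * (starRingEnd ℂ) (w (s, x)) = 0
      rw [sw s hsI x hx, mul_zero, zero_mul]
    have intAllw : Integrable fun x =>
        (Fw (s, x) - D (s, x) - (q x : ℂ) * w (s, x)) * (starRingEnd ℂ) (w (s, x)) := by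
      have hfun : (fun x => (Fw (s, x) - D (s, x) - (q x : ℂ) * w (s, x))
          * (starRingEnd ℂ) (w (s, x)))
          = fun x => Fw (s, x) * (starRingEnd ℂ) (w (s, x))
            - D (s, x) * (starRingEnd ℂ) (w (s, x))
            - (q x : ℂ) * w (s, x) * (starRingEnd ℂ) (w (s, x)) := by
        funext x; ring
      rw [hfun]; exact (intFw.sub intD).sub intQw
    have hqIm : (∫ x, (q x : ℂ) * w (s, x) * (starRingEnd ℂ) (w (s, x))).im = 0 := by
      have hfun : (fun x => (q x : ℂ) * w (s, x) * (starRingEnd ℂ) (w (s, x)))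
          = fun x => ((q x * ‖w (s, x)‖ ^ 2 : ℝ) : ℂ) := by
        funext x
        rw [mul_assoc, Complex.mul_conj, Complex.normSq_eq_norm_sq]
        push_cast; ring
      rw [hfun]
      have h2 : (∫ x, ((q x * ‖w (s, x)‖ ^ 2 : ℝ) : ℂ))
          = ((∫ x, q x * ‖w (s, x)‖ ^ 2 : ℝ) : ℂ) := integral_ofReal
      rw [h2, Complex.ofReal_im]
    calc ∫ x, (w₂ (s, x) * (starRingEnd ℂ) (w (s, x))).re
        = ∫ x, ((Fw (s, x) - D (s, x) - (q x : ℂ) * w (s, x))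
            * (starRingEnd ℂ) (w (s, x))).im :=
          integral_congr_ae (Filter.Eventually.of_forall hptw)
      _ = (∫ x, (Fw (s, x) - D (s, x) - (q x : ℂ) * w (s, x))
            * (starRingEnd ℂ) (w (s, x))).im := by
          simpa using integral_im intAllw
      _ = (∫ x, Fw (s, x) * (starRingEnd ℂ) (w (s, x))).im := by
          have hfun : (fun x => (Fw (s, x) - D (s, x) - (q x : ℂ) * w (s, x))
              * (starRingEnd ℂ) (w (s, x)))
              = fun x => Fw (s, x) * (starRingEnd ℂ) (w (s, x))
                - D (s, x) * (starRingEnd ℂ) (w (s, x))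
                - (q x : ℂ) * w (s, x) * (starRingEnd ℂ) (w (s, x)) := by
            funext x; ring
          have intFD : Integrable fun x => Fw (s, x) * (starRingEnd ℂ) (w (s, x))
              - D (s, x) * (starRingEnd ℂ) (w (s, x)) := intFw.sub intD
          rw [hfun, integral_sub intFD intQw, integral_sub intFw intD,
            Complex.sub_im, Complex.sub_im, hDIm, hqIm]
          ring
      _ ≤ ‖∫ x, Fw (s, x) * (starRingEnd ℂ) (w (s, x))‖ :=
          le_trans (le_abs_self _) (Complex.abs_im_le_norm _)
      _ ≤ Real.sqrt (∫ x, ‖Fw (s, x)‖ ^ 2) * Real.sqrt (∫ x, ‖w (s, x)‖ ^ 2) :=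
          integral_cs hK cFws cws (fun x hx => sFw s hsI x hx) (fun x hx => sw s hsI x hx)
      _ = hA s * Real.sqrt (∫ x, ‖w (s, x)‖ ^ 2) := rfl
  -- interval integrals of the controlling functions
  set Ai : ℝ := ∫ σ in (0:ℝ)..T, hA σ with hAidef
  set Bi : ℝ := ∫ σ in (0:ℝ)..T, hB σ with hBidef
  have hAint : IntervalIntegrable hA volume 0 T := by
    have hc : ContinuousOn hA (Set.uIcc 0 T) := by rw [Set.uIcc_of_le hT.le]; exact hAcont
    exact hc.intervalIntegrable
  have hBint : IntervalIntegrable hB volume 0 T := by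
    have hc : ContinuousOn hB (Set.uIcc 0 T) := by rw [Set.uIcc_of_le hT.le]; exact hBcont
    exact hc.intervalIntegrable
  have hAi_nn : 0 ≤ Ai := intervalIntegral.integral_nonneg hT.le fun σ _ => hAnn σ
  have hBi_nn : 0 ≤ Bi := intervalIntegral.integral_nonneg hT.le fun σ _ => hBnn σ
  have hpartialA : ∀ s ∈ Set.Icc (0:ℝ) T, (∫ σ in (0:ℝ)..s, hA σ) ≤ Ai := by
    intro s hsI
    exact intervalIntegral.integral_mono_interval le_rfl hsI.1 hsI.2
      (Filter.Eventually.of_forall fun σ => hAnn σ) hAint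
  have hpartialB : ∀ s ∈ Set.Icc (0:ℝ) T, (∫ σ in (0:ℝ)..s, hB σ) ≤ Bi := by
    intro s hsI
    exact intervalIntegral.integral_mono_interval le_rfl hsI.1 hsI.2
      (Filter.Eventually.of_forall fun σ => hBnn σ) hBint
  have hBA : Bi ≤ T * Ai := by
    have hbb : ∀ σ ∈ Set.Icc (0:ℝ) T, hB σ ≤ Ai :=
      fun σ hσ => le_trans (estA σ hσ) (hpartialA σ hσ)
    calc Bi ≤ ∫ _σ in (0:ℝ)..T, Ai :=
          intervalIntegral.integral_mono_on hT.le hBint intervalIntegrable_const hbb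
      _ = T * Ai := by simp
  -- the three norms at time t
  have bV : Real.sqrt (∫ x, ‖v (t, x)‖ ^ 2) ≤ Bi := le_trans (estB t ht) (hpartialB t ht)
  have bW : Real.sqrt (∫ x, ‖w (t, x)‖ ^ 2) ≤ Ai := le_trans (estC t ht) (hpartialA t ht)
  have bF : Real.sqrt (∫ x, ‖F (t, x)‖ ^ 2) ≤ Ai := le_trans (estA t ht) (hpartialA t ht)
  -- the gradient square
  set P : ℝ := ∑ j, ∫ x, ‖pd j (fun y => v (t, y)) x‖ ^ 2 with hPdef2
  have hPnn : 0 ≤ P :=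
    Finset.sum_nonneg fun j _ => integral_nonneg fun x => by positivity
  have cvt : Continuous fun x => v (t, x) :=
    hv.continuous.comp (continuous_const.prodMk continuous_id)
  have cconjvt : Continuous fun x => (starRingEnd ℂ) (v (t, x)) :=
    Complex.continuous_conj.comp cvt
  have cFt : Continuous fun x => F (t, x) :=
    hF.continuous.comp (continuous_const.prodMk continuous_id)
  have cwt : Continuous fun x => w (t, x) :=
    hw_cont.comp (continuous_const.prodMk continuous_id)
  have hPid : ∫ x, lapC (fun y => v (t, y)) x * (starRingEnd ℂ) (v (t, x)) = -(P : ℂ) := by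
    rw [pairing t ht _ ((hVt2 t).of_le one_le_two) (fun x hx => sv t ht x hx)]
    have hz : ∀ j : Fin n, ∫ x, pd j (fun y => v (t, y)) x
        * (starRingEnd ℂ) (pd j (fun y => v (t, y)) x)
        = ((∫ x, ‖pd j (fun y => v (t, y)) x‖ ^ 2 : ℝ) : ℂ) := fun j =>
      mulconj _ (pd_continuous j ((hVt2 t).of_le one_le_two))
        (fun x hx => pd_zero_outside hK.isClosed (fun y hy => sv t ht y hy) hx j)
    rw [Finset.sum_congr rfl fun j _ => hz j]
    rw [hPdef2]
    push_cast; ring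
  -- PDE at time t
  have hlap_pde : ∀ x, lapC (fun y => v (t, y)) x
      = F (t, x) - (q x : ℂ) * v (t, x) - Complex.I * w (t, x) := by
    intro x; linear_combination hPDEw t ht x
  -- integrability at time t
  have intFt : Integrable fun x => F (t, x) * (starRingEnd ℂ) (v (t, x)) := by
    refine integrable_of_supp hK (cFt.mul cconjvt) fun x hx => ?_
    show F (t, x) * (starRingEnd ℂ) (v (t, x)) = 0
    rw [sF t ht x hx, zero_mul]
  have intQt : Integrable fun x => (q x : ℂ) * v (t, x) * (starRingEnd ℂ) (v (t, x)) := by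
    refine integrable_of_supp hK
      (((Complex.continuous_ofReal.comp hq).mul cvt).mul cconjvt) fun x hx => ?_
    show (q x : ℂ) * v (t, x) * (starRingEnd ℂ) (v (t, x)) = 0
    rw [sv t ht x hx, mul_zero, zero_mul]
  have intWt : Integrable fun x => Complex.I * (w (t, x) * (starRingEnd ℂ) (v (t, x))) := by
    refine integrable_of_supp hK (continuous_const.mul (cwt.mul cconjvt)) fun x hx => ?_
    show Complex.I * (w (t, x) * (starRingEnd ℂ) (v (t, x))) = 0
    rw [sw t ht x hx, zero_mul, mul_zero]
  have intWt' : Integrable fun x => w (t, x) * (starRingEnd ℂ) (v (t, x)) := by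
    refine integrable_of_supp hK (cwt.mul cconjvt) fun x hx => ?_
    show w (t, x) * (starRingEnd ℂ) (v (t, x)) = 0
    rw [sw t ht x hx, zero_mul]
  -- split the pairing
  have hsplit : (-(P:ℂ)) = (∫ x, F (t, x) * (starRingEnd ℂ) (v (t, x)))
      - (∫ x, (q x : ℂ) * v (t, x) * (starRingEnd ℂ) (v (t, x)))
      - Complex.I * (∫ x, w (t, x) * (starRingEnd ℂ) (v (t, x))) := by
    rw [← hPid]
    have hfun : (fun x => lapC (fun y => v (t, y)) x * (starRingEnd ℂ) (v (t, x)))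
        = fun x => F (t, x) * (starRingEnd ℂ) (v (t, x))
          - (q x : ℂ) * v (t, x) * (starRingEnd ℂ) (v (t, x))
          - Complex.I * (w (t, x) * (starRingEnd ℂ) (v (t, x))) := by
      funext x; rw [hlap_pde x]; ring
    have intFQ : Integrable fun x => F (t, x) * (starRingEnd ℂ) (v (t, x))
        - (q x : ℂ) * v (t, x) * (starRingEnd ℂ) (v (t, x)) := intFt.sub intQt
    rw [hfun, integral_sub intFQ intWt, integral_sub intFt intQt]
    have hI : ∫ x, Complex.I * (w (t, x) * (starRingEnd ℂ) (v (t, x)))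
        = Complex.I * ∫ x, w (t, x) * (starRingEnd ℂ) (v (t, x)) := by
      simpa using integral_smul (Complex.I) (fun x => w (t, x) * (starRingEnd ℂ) (v (t, x)))
    rw [hI]
  -- real parts
  have hQre : (∫ x, (q x : ℂ) * v (t, x) * (starRingEnd ℂ) (v (t, x))).re
      ≤ M' * ∫ x, ‖v (t, x)‖ ^ 2 := by
    have hfun : (fun x => (q x : ℂ) * v (t, x) * (starRingEnd ℂ) (v (t, x)))
        = fun x => ((q x * ‖v (t, x)‖ ^ 2 : ℝ) : ℂ) := by
      funext x
      rw [mul_assoc, Complex.mul_conj, Complex.normSq_eq_norm_sq]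
      push_cast; ring
    rw [hfun]
    have h2 : (∫ x, ((q x * ‖v (t, x)‖ ^ 2 : ℝ) : ℂ))
        = ((∫ x, q x * ‖v (t, x)‖ ^ 2 : ℝ) : ℂ) := integral_ofReal
    rw [h2, Complex.ofReal_re]
    have int1 : Integrable fun x => q x * ‖v (t, x)‖ ^ 2 := by
      refine integrable_of_supp hK (by fun_prop) fun x hx => ?_
      show q x * ‖v (t, x)‖ ^ 2 = 0
      rw [sv t ht x hx]; simp
    have int2 : Integrable fun x => M' * ‖v (t, x)‖ ^ 2 := by
      refine integrable_of_supp hK (by fun_prop) fun x hx => ?_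
      show M' * ‖v (t, x)‖ ^ 2 = 0
      rw [sv t ht x hx]; simp
    calc ∫ x, q x * ‖v (t, x)‖ ^ 2 ≤ ∫ x, M' * ‖v (t, x)‖ ^ 2 := by
          refine integral_mono int1 int2 fun x => ?_
          have := hqM' x
          have h3 : 0 ≤ ‖v (t, x)‖ ^ 2 := by positivity
          nlinarith [abs_le.1 (hqM' x)]
      _ = M' * ∫ x, ‖v (t, x)‖ ^ 2 := integral_const_mul _ _
  have hFre : -(∫ x, F (t, x) * (starRingEnd ℂ) (v (t, x))).re
      ≤ Real.sqrt (∫ x, ‖F (t, x)‖ ^ 2) * Real.sqrt (∫ x, ‖v (t, x)‖ ^ 2) := by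
    refine le_trans ?_ (integral_cs hK cFt cvt (fun x hx => sF t ht x hx)
      (fun x hx => sv t ht x hx))
    refine le_trans (neg_le_abs _) ?_
    exact Complex.abs_re_le_norm _
  have hWre : (Complex.I * (∫ x, w (t, x) * (starRingEnd ℂ) (v (t, x)))).re
      ≤ Real.sqrt (∫ x, ‖w (t, x)‖ ^ 2) * Real.sqrt (∫ x, ‖v (t, x)‖ ^ 2) := by
    refine le_trans ?_ (integral_cs hK cwt cvt (fun x hx => sw t ht x hx)
      (fun x hx => sv t ht x hx))
    have : (Complex.I * (∫ x, w (t, x) * (starRingEnd ℂ) (v (t, x)))).re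
        = -(∫ x, w (t, x) * (starRingEnd ℂ) (v (t, x))).im := by
      simp [Complex.mul_re]
    rw [this]
    exact le_trans (neg_le_abs _) (Complex.abs_im_le_norm _)
  -- the key bound for P
  have hVsq : (∫ x, ‖v (t, x)‖ ^ 2) = Real.sqrt (∫ x, ‖v (t, x)‖ ^ 2) ^ 2 :=
    (Real.sq_sqrt (integral_nonneg fun x => by positivity)).symm
  have hPbound : P ≤ (2 + M' * T) * (Ai * Bi) := by
    have hPre : (P : ℝ) = -(-(P:ℂ)).re := by simp
    have hsplit_re : -(-(P:ℂ)).re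
        = -(∫ x, F (t, x) * (starRingEnd ℂ) (v (t, x))).re
          + (∫ x, (q x : ℂ) * v (t, x) * (starRingEnd ℂ) (v (t, x))).re
          + (Complex.I * (∫ x, w (t, x) * (starRingEnd ℂ) (v (t, x)))).re := by
      rw [hsplit]
      simp [Complex.sub_re, Complex.mul_re]
      ring
    have hsqv := Real.sqrt_nonneg (∫ x, ‖v (t, x)‖ ^ 2)
    have hsqF := Real.sqrt_nonneg (∫ x, ‖F (t, x)‖ ^ 2)
    have hsqw := Real.sqrt_nonneg (∫ x, ‖w (t, x)‖ ^ 2)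
    have hp1 : Real.sqrt (∫ x, ‖F (t, x)‖ ^ 2) * Real.sqrt (∫ x, ‖v (t, x)‖ ^ 2)
        ≤ Ai * Bi := mul_le_mul bF bV hsqv hAi_nn
    have hp2 : Real.sqrt (∫ x, ‖w (t, x)‖ ^ 2) * Real.sqrt (∫ x, ‖v (t, x)‖ ^ 2)
        ≤ Ai * Bi := mul_le_mul bW bV hsqv hAi_nn
    have hp3 : (∫ x, ‖v (t, x)‖ ^ 2) ≤ (T * Ai) * Bi := by
      rw [hVsq]
      nlinarith [bV, hBA, hBi_nn]
    have hq3 : M' * (∫ x, ‖v (t, x)‖ ^ 2) ≤ M' * ((T * Ai) * Bi) := by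
      exact mul_le_mul_of_nonneg_left hp3 hM'nn
    have := hQre
    rw [hPre, hsplit_re]
    nlinarith [hFre, hWre, hQre, hq3]
  -- identify the goal quantities
  have hgrad : gradL2norm (fun x => v (t, x)) = Real.sqrt P := by
    rw [gradL2norm, ← Real.sqrt_eq_rpow]
    congr 1
    rw [hPdef2, ← integral_finset_sum]
    intro j _
    refine integrable_of_supp hK (by
      exact (pd_continuous j ((hVt2 t).of_le one_le_two)).norm.pow 2) fun x hx => ?_
    show ‖pd j (fun y => v (t, y)) x‖ ^ 2 = 0
    rw [pd_zero_outside hK.isClosed (fun y hy => sv t ht y hy) hx j]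
    simp
  have hAeq : (∫ s in (0:ℝ)..T, L2norm (fun x => deriv (fun τ => F (τ, x)) s)) = Ai := by
    rw [hAidef]
    congr 1
    funext s
    rw [L2norm, ← Real.sqrt_eq_rpow]
    show Real.sqrt (∫ x, ‖deriv (fun τ => F (τ, x)) s‖ ^ 2)
      = Real.sqrt (∫ x, ‖Fw (s, x)‖ ^ 2)
    congr 1
    congr 1
    funext x
    rw [hFw_eq s x]
  have hBeq : (∫ s in (0:ℝ)..T, L2norm (fun x => F (s, x))) = Bi := by
    rw [hBidef]
    congr 1
    funext s
    rw [L2norm, ← Real.sqrt_eq_rpow]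
  rw [hgrad, hAeq, hBeq]
  -- AM-GM step
  have hsum_nn : 0 ≤ η * Ai + η⁻¹ * Bi := by positivity
  have hgm : Real.sqrt (Ai * Bi) ≤ (η * Ai + η⁻¹ * Bi) / 2 := by
    have h1 : Ai * Bi = (η * Ai) * (η⁻¹ * Bi) := by
      field_simp
    rw [h1]
    have h2 : Real.sqrt ((η * Ai) * (η⁻¹ * Bi))
        ≤ Real.sqrt (((η * Ai + η⁻¹ * Bi) / 2) ^ 2) :=
      Real.sqrt_le_sqrt (by nlinarith [sq_nonneg (η * Ai - η⁻¹ * Bi)])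
    rwa [Real.sqrt_sq (by positivity)] at h2
  calc Real.sqrt P ≤ Real.sqrt ((2 + M' * T) * (Ai * Bi)) := Real.sqrt_le_sqrt hPbound
    _ = Real.sqrt (2 + M' * T) * Real.sqrt (Ai * Bi) :=
        Real.sqrt_mul (by positivity) _
    _ ≤ Real.sqrt (2 + M' * T) * ((η * Ai + η⁻¹ * Bi) / 2) :=
        mul_le_mul_of_nonneg_left hgm (Real.sqrt_nonneg _)
    _ = Real.sqrt (2 + M' * T) / 2 * (η * Ai + η⁻¹ * Bi) := by ring
end
end

section
/- Let n ≥ 1, T > 0, T₀ > 0, λ > 0. Let q : ℝⁿ → ℝ be bounded and continuous and ψ : ℝⁿ → ℝ continuous. Let k₀ : ℝ × ℝⁿ → ℂ be continuous with k₀(s,·) = 0 for s ∉ (0,T₀), vanishing outside a fixed compact set in x, and with s ↦ ‖k₀(s,·)‖_{L²} integrable. Let v : ℝ × ℝⁿ → ℂ be continuously differentiable, twice continuously differentiable in x, vanishing outside a fixed compact set in x, with v(0,·) = 0, and satisfying i ∂ₜv + Δv + q v = − exp(iλ(ψ(x) − λt)) k₀(2λt, x) on [0,T] × ℝⁿ.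 Then for every t ∈ [0,T], ‖v(t,·)‖_{L²} ≤ (2λ)⁻¹ ∫₀^{T₀} ‖k₀(s,·)‖_{L²} ds. -/
open MeasureTheory Complex

noncomputable section

namespace Stmt8Aux

variable {n : ℕ}

local notation "Nn" => EuclideanSpace ℝ (Fin n)

lemma pd_zero_off {f : Nn → ℂ} {K : Set Nn} (hK : IsClosed K)
    (h : ∀ x ∉ K, f x = 0) (j : Fin n) : ∀ x ∉ K, pd j f x = 0 := by
  intro x hx
  have hev : f =ᶠ[nhds x] (fun _ => (0:ℂ)) :=
    Filter.eventually_of_mem (hK.isOpen_compl.mem_nhds hx) (fun y hy => h y hy)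
  unfold pd
  rw [hev.fderiv_eq, fderiv_fun_const]
  simp

lemma conj_fderiv {f : Nn → ℂ} (hf : Differentiable ℝ f) (x : Nn) (j : Fin n) :
    fderiv ℝ (fun y => (starRingEnd ℂ) (f y)) x (EuclideanSpace.single j 1)
      = (starRingEnd ℂ) (pd j f x) := by
  have h1 : HasFDerivAt (fun y => (starRingEnd ℂ) (f y))
      ((Complex.conjCLE : ℂ →L[ℝ] ℂ).comp (fderiv ℝ f x)) x :=
    (Complex.conjCLE.toContinuousLinearMap.hasFDerivAt).comp x (hf x).hasFDerivAt
  rw [h1.fderiv]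
  rfl

theorem ibp_im_zero {f : Nn → ℂ} (hf : ContDiff ℝ 2 f) {K : Set Nn} (hK : IsCompact K)
    (h0 : ∀ x ∉ K, f x = 0) : (∫ x, (starRingEnd ℂ) (f x) * lapC f x).im = 0 := by
  classical
  have hfd : Differentiable ℝ f := (hf.differentiable (by norm_num))
  have hpdC : ∀ j, ContDiff ℝ 1 (pd j f) := fun j =>
    (hf.fderiv_right (by norm_num)).clm_apply contDiff_const
  have hpd_cont : ∀ j, Continuous (pd j f) := fun j => (hpdC j).continuous
  have hpd2_cont : ∀ j, Continuous (pd j (pd j f)) := fun j =>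
    ((hpdC j).continuous_fderiv one_ne_zero).clm_apply continuous_const
  have hpd0 : ∀ j, ∀ x ∉ K, pd j f x = 0 := fun j => pd_zero_off hK.isClosed h0 j
  have hcs : ∀ (g : Nn → ℂ), (∀ x ∉ K, g x = 0) → HasCompactSupport g := fun g hg =>
    HasCompactSupport.intro hK hg
  have hint : ∀ j : Fin n, Integrable (fun x => (starRingEnd ℂ) (f x) * pd j (pd j f) x) := by
    intro j
    refine Continuous.integrable_of_hasCompactSupport
      ((Complex.continuous_conj.comp hf.continuous).mul (hpd2_cont j)) (hcs _ ?_)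
    intro x hx; simp [h0 x hx]
  have hsplit : (∫ x, (starRingEnd ℂ) (f x) * lapC f x)
      = ∑ j, ∫ x, (starRingEnd ℂ) (f x) * pd j (pd j f) x := by
    rw [← integral_finset_sum _ (fun j _ => hint j)]
    unfold lapC
    congr 1; funext x; rw [Finset.mul_sum]
  rw [hsplit, Complex.im_sum]
  refine Finset.sum_eq_zero (fun j _ => ?_)
  have key : (∫ x, (starRingEnd ℂ) (f x) * pd j (pd j f) x)
      = - ∫ x, (starRingEnd ℂ) (pd j f x) * pd j f x := by
    have h1 : Integrable (fun x =>
        fderiv ℝ (fun y => (starRingEnd ℂ) (f y)) x (EuclideanSpace.single j 1) * pd j f x) := by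
      have : (fun x => fderiv ℝ (fun y => (starRingEnd ℂ) (f y)) x (EuclideanSpace.single j 1)
          * pd j f x) = fun x => (starRingEnd ℂ) (pd j f x) * pd j f x := by
        funext x; rw [conj_fderiv hfd x j]
      rw [this]
      refine Continuous.integrable_of_hasCompactSupport
        ((Complex.continuous_conj.comp (hpd_cont j)).mul (hpd_cont j)) (hcs _ ?_)
      intro x hx; simp [hpd0 j x hx]
    have h2 : Integrable (fun x => (starRingEnd ℂ) (f x)
        * fderiv ℝ (pd j f) x (EuclideanSpace.single j 1)) := hint j
    have h3 : Integrable (fun x => (starRingEnd ℂ) (f x) * pd j f x) := by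
      refine Continuous.integrable_of_hasCompactSupport
        ((Complex.continuous_conj.comp hf.continuous).mul (hpd_cont j)) (hcs _ ?_)
      intro x hx; simp [h0 x hx]
    have hdc : Differentiable ℝ (fun y => (starRingEnd ℂ) (f y)) := fun x =>
      ((Complex.conjCLE.toContinuousLinearMap.hasFDerivAt).comp x
        (hfd x).hasFDerivAt).differentiableAt
    have hdg : Differentiable ℝ (pd j f) := (hpdC j).differentiable one_ne_zero
    have hibp := integral_mul_fderiv_eq_neg_fderiv_mul_of_integrable (μ := volume)
      (f := fun y => (starRingEnd ℂ) (f y)) (g := pd j f) (v := EuclideanSpace.single j 1)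
      h1 h2 h3 (fun x _ => hdc x) (fun x _ => hdg x)
    calc (∫ x, (starRingEnd ℂ) (f x) * pd j (pd j f) x)
        = ∫ x, (starRingEnd ℂ) (f x) * fderiv ℝ (pd j f) x (EuclideanSpace.single j 1) := rfl
      _ = - ∫ x, fderiv ℝ (fun y => (starRingEnd ℂ) (f y)) x (EuclideanSpace.single j 1)
            * pd j f x := hibp
      _ = - ∫ x, (starRingEnd ℂ) (pd j f x) * pd j f x := by
            congr 1; apply integral_congr_ae; filter_upwards with x
            rw [conj_fderiv hfd x j]
  have him : (∫ x, (starRingEnd ℂ) (pd j f x) * pd j f x).im = 0 := by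
    have hI : Integrable (fun x => (starRingEnd ℂ) (pd j f x) * pd j f x) := by
      refine Continuous.integrable_of_hasCompactSupport
        ((Complex.continuous_conj.comp (hpd_cont j)).mul (hpd_cont j)) (hcs _ ?_)
      intro x hx; simp [hpd0 j x hx]
    have hptw : ∀ x : Nn, ((starRingEnd ℂ) (pd j f x) * pd j f x).im = 0 := by
      intro x; simp [Complex.mul_im]; ring
    rw [← Complex.imCLM_apply, ← ContinuousLinearMap.integral_comp_comm _ hI]
    simp only [Complex.imCLM_apply, hptw, integral_zero]
  rw [key, Complex.neg_im, him, neg_zero]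

lemma sqnorm_hasDerivAt {u : ℝ → ℂ} {u' : ℂ} {t : ℝ} (h : HasDerivAt u u' t) :
    HasDerivAt (fun s => ‖u s‖ ^ 2) (2 * ((starRingEnd ℂ) (u t) * u').re) t := by
  have hc : HasDerivAt (fun s => (starRingEnd ℂ) (u s)) ((starRingEnd ℂ) u') t := by
    have := h.star; simp only [RCLike.star_def] at this; exact this
  have hm : HasDerivAt (fun s => (starRingEnd ℂ) (u s) * u s)
      ((starRingEnd ℂ) u' * u t + (starRingEnd ℂ) (u t) * u') t := hc.mul h
  have hre := (Complex.reCLM.hasFDerivAt.comp_hasDerivAt t hm)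
  have heq : (⇑Complex.reCLM ∘ fun s => (starRingEnd ℂ) (u s) * u s) = fun s => ‖u s‖ ^ 2 := by
    funext s
    simp only [Function.comp_apply, Complex.reCLM_apply, Complex.mul_re, Complex.conj_re,
      Complex.conj_im]
    rw [Complex.sq_norm, Complex.normSq_apply]
    ring
  rw [heq] at hre
  refine hre.congr_deriv ?_
  simp only [Complex.reCLM_apply, Complex.add_re, Complex.mul_re, Complex.conj_re,
    Complex.conj_im]
  ring

end Stmt8Aux

/-- Remainder bound for the geometrical optics solution: if
`i ∂ₜv + Δv + q v = −e^{iλ(ψ(x)−λt)} k₀(2λt, x)` on `[0,T] × ℝⁿ` with `v(0,·) = 0`,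
then for `t ∈ [0,T]`, `‖v(t,·)‖_{L²} ≤ (2λ)⁻¹ ∫₀^{T₀} ‖k₀(s,·)‖_{L²} ds`. -/
theorem stmt8 {n : ℕ} (hn : 1 ≤ n) (T T₀ lam : ℝ) (hT : 0 < T) (hT₀ : 0 < T₀)
    (hlam : 0 < lam)
    (q : EuclideanSpace ℝ (Fin n) → ℝ)
    (hq_bdd : ∃ M : ℝ, ∀ x, |q x| ≤ M) (hq_cont : Continuous q)
    (ψ : EuclideanSpace ℝ (Fin n) → ℝ) (hψ : Continuous ψ)
    (k₀ : ℝ × EuclideanSpace ℝ (Fin n) → ℂ) (hk₀_cont : Continuous k₀)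
    (hk₀_supp_t : ∀ s ∉ Set.Ioo (0:ℝ) T₀, ∀ x, k₀ (s, x) = 0)
    (K₁ : Set (EuclideanSpace ℝ (Fin n))) (hK₁ : IsCompact K₁)
    (hk₀_supp_x : ∀ (s : ℝ), ∀ x ∉ K₁, k₀ (s, x) = 0)
    (hk₀_int : Integrable (fun s : ℝ => L2norm (fun x => k₀ (s, x))))
    (v : ℝ × EuclideanSpace ℝ (Fin n) → ℂ)
    (hv : ContDiff ℝ 1 v) (hvx : ∀ t : ℝ, ContDiff ℝ 2 (fun x => v (t, x)))
    (K₂ : Set (EuclideanSpace ℝ (Fin n))) (hK₂ : IsCompact K₂)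
    (hv_supp_x : ∀ (t : ℝ), ∀ x ∉ K₂, v (t, x) = 0)
    (hv0 : ∀ x, v (0, x) = 0)
    (hpde : ∀ t ∈ Set.Icc (0:ℝ) T, ∀ x,
      Complex.I * deriv (fun s => v (s, x)) t + lapC (fun y => v (t, y)) x
          + (q x : ℂ) * v (t, x)
        = -(Complex.exp (Complex.I * (lam : ℂ) * ((ψ x : ℂ) - (lam : ℂ) * (t : ℂ)))
            * k₀ (2 * lam * t, x))) :
    ∀ t ∈ Set.Icc (0:ℝ) T,
      L2norm (fun x => v (t, x))
        ≤ (2 * lam)⁻¹ * ∫ s in (0:ℝ)..T₀, L2norm (fun x => k₀ (s, x)) := by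
  have hvcont : Continuous v := hv.continuous
  set Vt : ℝ × EuclideanSpace ℝ (Fin n) → ℂ := fun p => fderiv ℝ v p (1, 0) with hVt_def
  have hVt_cont : Continuous Vt := (hv.continuous_fderiv one_ne_zero).clm_apply continuous_const
  have hderiv : ∀ (t : ℝ) (x : EuclideanSpace ℝ (Fin n)),
      HasDerivAt (fun s => v (s, x)) (Vt (t, x)) t := by
    intro t x
    have h1 : HasDerivAt (fun s : ℝ => (s, x)) ((1 : ℝ), (0 : EuclideanSpace ℝ (Fin n))) t :=
      (hasDerivAt_id t).prodMk (hasDerivAt_const t x)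
    exact ((hv.differentiable one_ne_zero (t, x)).hasFDerivAt.comp_hasDerivAt t h1)
  set P : ℝ → EuclideanSpace ℝ (Fin n) → ℝ :=
    fun t x => 2 * ((starRingEnd ℂ) (v (t, x)) * Vt (t, x)).re with hP_def
  have hP_cont : Continuous (fun p : ℝ × EuclideanSpace ℝ (Fin n) => P p.1 p.2) :=
    continuous_const.mul (Complex.continuous_re.comp
      ((Complex.continuous_conj.comp hvcont).mul hVt_cont))
  have hP0 : ∀ (t : ℝ), ∀ x ∉ K₂, P t x = 0 := by
    intro t x hx; simp [hP_def, hv_supp_x t x hx]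
  have hvtx_cont : ∀ t : ℝ, Continuous (fun x : EuclideanSpace ℝ (Fin n) => v (t, x)) := fun t =>
    hvcont.comp (Continuous.prodMk_right t)
  have hE_int : ∀ t : ℝ, Integrable (fun x : EuclideanSpace ℝ (Fin n) => ‖v (t, x)‖ ^ 2) := by
    intro t
    refine Continuous.integrable_of_hasCompactSupport ((hvtx_cont t).norm.pow 2)
      (HasCompactSupport.intro hK₂ ?_)
    intro x hx; simp [hv_supp_x t x hx]
  set E : ℝ → ℝ := fun t => ∫ x : EuclideanSpace ℝ (Fin n), ‖v (t, x)‖ ^ 2 with hE_def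
  have hE_nonneg : ∀ t, 0 ≤ E t := fun t => integral_nonneg (fun x => by positivity)
  have hE0 : E 0 = 0 := by simp [hE_def, hv0]
  have hE_deriv : ∀ t₀ : ℝ, HasDerivAt E (∫ x : EuclideanSpace ℝ (Fin n), P t₀ x) t₀ := by
    intro t₀
    obtain ⟨C, hC⟩ :=
      ((isCompact_Icc (a := t₀ - 1) (b := t₀ + 1)).prod hK₂).exists_bound_of_continuousOn
        hP_cont.continuousOn
    refine (hasDerivAt_integral_of_dominated_loc_of_deriv_le (s := Metric.ball t₀ 1)
      (F := fun t (x : EuclideanSpace ℝ (Fin n)) => ‖v (t, x)‖ ^ 2) (F' := P)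
      (bound := K₂.indicator fun _ => C) (Metric.ball_mem_nhds t₀ one_pos)
      (Filter.Eventually.of_forall fun t => ((hvtx_cont t).norm.pow 2).aestronglyMeasurable)
      (hE_int t₀)
      ?_ ?_ ?_ ?_).2
    · exact (continuous_const.mul (Complex.continuous_re.comp
        ((Complex.continuous_conj.comp (hvtx_cont t₀)).mul
          (hVt_cont.comp (Continuous.prodMk_right t₀))))).aestronglyMeasurable
    · refine Filter.Eventually.of_forall (fun x => fun t ht => ?_)
      by_cases hx : x ∈ K₂
      · have hmem : ((t, x) : ℝ × EuclideanSpace ℝ (Fin n))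
            ∈ (Set.Icc (t₀ - 1) (t₀ + 1)) ×ˢ K₂ := by
          constructor
          · have := Metric.mem_ball.mp ht
            rw [Real.dist_eq] at this
            obtain ⟨ha, hb⟩ := abs_lt.mp this
            constructor <;> linarith
          · exact hx
        have := hC _ hmem
        rw [Set.indicator_of_mem hx]
        exact this
      · rw [Set.indicator_of_notMem hx, hP0 t x hx]
        simp
    · exact (integrable_indicator_iff hK₂.isClosed.measurableSet).2
        (integrableOn_const hK₂.measure_lt_top.ne)
    · exact Filter.Eventually.of_forall (fun x => fun t _ =>
        Stmt8Aux.sqnorm_hasDerivAt (hderiv t x))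
  -- the source term
  set g : ℝ → ℝ := fun s => ∫ x : EuclideanSpace ℝ (Fin n), ‖k₀ (s, x)‖ ^ 2 with hg_def
  have hktx_cont : ∀ s : ℝ, Continuous (fun x : EuclideanSpace ℝ (Fin n) => k₀ (s, x)) :=
    fun s => hk₀_cont.comp (Continuous.prodMk_right s)
  have hg_int : ∀ s : ℝ, Integrable (fun x : EuclideanSpace ℝ (Fin n) => ‖k₀ (s, x)‖ ^ 2) := by
    intro s
    refine Continuous.integrable_of_hasCompactSupport ((hktx_cont s).norm.pow 2)
      (HasCompactSupport.intro hK₁ ?_)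
    intro x hx; simp [hk₀_supp_x s x hx]
  have hg_nonneg : ∀ s, 0 ≤ g s := fun s => integral_nonneg (fun x => by positivity)
  have hg_cont : Continuous g := by
    rw [continuous_iff_continuousAt]
    intro s₀
    have hQ : Continuous (fun p : ℝ × EuclideanSpace ℝ (Fin n) => ‖k₀ p‖ ^ 2) :=
      hk₀_cont.norm.pow 2
    obtain ⟨C, hC⟩ :=
      ((isCompact_Icc (a := s₀ - 1) (b := s₀ + 1)).prod hK₁).exists_bound_of_continuousOn
        hQ.continuousOn
    refine continuousAt_of_dominated (bound := K₁.indicator fun _ => C)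
      (Filter.Eventually.of_forall fun s => ((hktx_cont s).norm.pow 2).aestronglyMeasurable)
      ?_ ?_ ?_
    · refine Filter.eventually_of_mem (Metric.ball_mem_nhds s₀ one_pos) (fun s hs => ?_)
      refine Filter.Eventually.of_forall (fun x => ?_)
      by_cases hx : x ∈ K₁
      · have hmem : ((s, x) : ℝ × EuclideanSpace ℝ (Fin n))
            ∈ (Set.Icc (s₀ - 1) (s₀ + 1)) ×ˢ K₁ := by
          constructor
          · have := Metric.mem_ball.mp hs
            rw [Real.dist_eq] at this
            obtain ⟨ha, hb⟩ := abs_lt.mp this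
            constructor <;> linarith
          · exact hx
        have := hC _ hmem
        rw [Set.indicator_of_mem hx]
        simpa using this
      · rw [Set.indicator_of_notMem hx]
        simp [hk₀_supp_x s x hx]
    · exact (integrable_indicator_iff hK₁.isClosed.measurableSet).2
        (integrableOn_const hK₁.measure_lt_top.ne)
    · exact Filter.Eventually.of_forall (fun x =>
        ((hk₀_cont.comp (continuous_id.prodMk continuous_const)).norm.pow 2).continuousAt)
  set h : ℝ → ℝ := fun s => L2norm (fun x => k₀ (s, x)) with hh_def
  have hh_eq : h = fun s => Real.sqrt (g s) := by
    funext s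
    rw [hh_def, hg_def, Real.sqrt_eq_rpow]
    rfl
  have hh_cont : Continuous h := by rw [hh_eq]; exact Real.continuous_sqrt.comp hg_cont
  have hh_nonneg : ∀ s, 0 ≤ h s := by intro s; rw [hh_eq]; exact Real.sqrt_nonneg _
  have hh_int : Integrable h := hk₀_int
  have hh_zero : ∀ s, T₀ ≤ s → h s = 0 := by
    intro s hs
    have hk : ∀ x, k₀ (s, x) = 0 := hk₀_supp_t s (by
      intro hmem; exact absurd hmem.2 (not_lt.mpr hs))
    have hgs : g s = 0 := by
      simp only [hg_def, hk]; simp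
    simp only [hh_eq]
    rw [hgs, Real.sqrt_zero]
  -- the key differential inequality
  have hD_le : ∀ t ∈ Set.Icc (0:ℝ) T,
      (∫ x : EuclideanSpace ℝ (Fin n), P t x)
        ≤ 2 * Real.sqrt (E t) * h (2 * lam * t) := by
    intro t ht
    have hfC2 : ContDiff ℝ 2 (fun y => v (t, y)) := hvx t
    have hlam_ne : Continuous (fun x : EuclideanSpace ℝ (Fin n) =>
        Complex.exp (Complex.I * (lam : ℂ) * ((ψ x : ℂ) - (lam : ℂ) * (t : ℂ)))) := by
      apply Complex.continuous_exp.comp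
      exact continuous_const.mul ((Complex.continuous_ofReal.comp hψ).sub continuous_const)
    have he_norm : ∀ x : EuclideanSpace ℝ (Fin n),
        ‖Complex.exp (Complex.I * (lam : ℂ) * ((ψ x : ℂ) - (lam : ℂ) * (t : ℂ)))‖ = 1 := by
      intro x
      rw [Complex.norm_exp]
      have : (Complex.I * (lam : ℂ) * ((ψ x : ℂ) - (lam : ℂ) * (t : ℂ))).re = 0 := by
        simp [Complex.mul_re, Complex.mul_im]
      rw [this, Real.exp_zero]
    have hVt_eq : ∀ x, Vt (t, x)
        = Complex.I * (lapC (fun y => v (t, y)) x + (q x : ℂ) * v (t, x)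
          + Complex.exp (Complex.I * (lam : ℂ) * ((ψ x : ℂ) - (lam : ℂ) * (t : ℂ)))
            * k₀ (2 * lam * t, x)) := by
      intro x
      have hp := hpde t ht x
      rw [(hderiv t x).deriv] at hp
      have h2 : Complex.I * Vt (t, x)
          = -(Complex.exp (Complex.I * (lam : ℂ) * ((ψ x : ℂ) - (lam : ℂ) * (t : ℂ)))
              * k₀ (2 * lam * t, x)) - lapC (fun y => v (t, y)) x - (q x : ℂ) * v (t, x) := by
        linear_combination hp
      have h3 := congrArg (fun z => -Complex.I * z) h2
      simp only [← mul_assoc, neg_mul, Complex.I_mul_I, neg_neg, one_mul] at h3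
      rw [h3]; ring
    have hpd2_cont : Continuous (lapC (fun y => v (t, y))) := by
      unfold lapC
      refine continuous_finset_sum _ (fun j _ => ?_)
      have hpdC : ContDiff ℝ 1 (pd j (fun y => v (t, y))) :=
        (hfC2.fderiv_right (by norm_num)).clm_apply contDiff_const
      exact (hpdC.continuous_fderiv one_ne_zero).clm_apply continuous_const
    have hC_int : Integrable (fun x => (starRingEnd ℂ) (v (t, x))
        * lapC (fun y => v (t, y)) x) := by
      refine Continuous.integrable_of_hasCompactSupport
        ((Complex.continuous_conj.comp (hvtx_cont t)).mul hpd2_cont)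
        (HasCompactSupport.intro hK₂ ?_)
      intro x hx; simp [hv_supp_x t x hx]
    have hA_int : Integrable (fun x => (-2:ℝ) * ((starRingEnd ℂ) (v (t, x))
        * lapC (fun y => v (t, y)) x).im) := by
      refine Continuous.integrable_of_hasCompactSupport
        (continuous_const.mul (Complex.continuous_im.comp
          ((Complex.continuous_conj.comp (hvtx_cont t)).mul hpd2_cont)))
        (HasCompactSupport.intro hK₂ ?_)
      intro x hx; simp [hv_supp_x t x hx]
    have hek_cont : Continuous (fun x : EuclideanSpace ℝ (Fin n) =>
        Complex.exp (Complex.I * (lam : ℂ) * ((ψ x : ℂ) - (lam : ℂ) * (t : ℂ)))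
          * k₀ (2 * lam * t, x)) := hlam_ne.mul (hktx_cont _)
    have hB_int : Integrable (fun x => (-2:ℝ) * ((starRingEnd ℂ) (v (t, x))
        * (Complex.exp (Complex.I * (lam : ℂ) * ((ψ x : ℂ) - (lam : ℂ) * (t : ℂ)))
          * k₀ (2 * lam * t, x))).im) := by
      refine Continuous.integrable_of_hasCompactSupport
        (continuous_const.mul (Complex.continuous_im.comp
          ((Complex.continuous_conj.comp (hvtx_cont t)).mul hek_cont)))
        (HasCompactSupport.intro hK₂ ?_)
      intro x hx; simp [hv_supp_x t x hx]
    have hfk_int : Integrable (fun x => ‖v (t, x)‖ * ‖k₀ (2 * lam * t, x)‖) := by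
      refine Continuous.integrable_of_hasCompactSupport
        ((hvtx_cont t).norm.mul (hktx_cont _).norm)
        (HasCompactSupport.intro hK₂ ?_)
      intro x hx; simp [hv_supp_x t x hx]
    have hPtw : (fun x => P t x) = fun x =>
        ((-2:ℝ) * ((starRingEnd ℂ) (v (t, x)) * lapC (fun y => v (t, y)) x).im)
        + ((-2:ℝ) * ((starRingEnd ℂ) (v (t, x))
          * (Complex.exp (Complex.I * (lam : ℂ) * ((ψ x : ℂ) - (lam : ℂ) * (t : ℂ)))
            * k₀ (2 * lam * t, x))).im) := by
      funext x
      rw [hP_def]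
      simp only []
      rw [hVt_eq x]
      simp only [Complex.mul_re, Complex.mul_im, Complex.add_re, Complex.add_im,
        Complex.I_re, Complex.I_im, Complex.conj_re, Complex.conj_im,
        Complex.ofReal_re, Complex.ofReal_im]
      ring
    have hsplit : (∫ x : EuclideanSpace ℝ (Fin n), P t x)
        = (∫ x, (-2:ℝ) * ((starRingEnd ℂ) (v (t, x)) * lapC (fun y => v (t, y)) x).im)
          + ∫ x, (-2:ℝ) * ((starRingEnd ℂ) (v (t, x))
            * (Complex.exp (Complex.I * (lam : ℂ) * ((ψ x : ℂ) - (lam : ℂ) * (t : ℂ)))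
              * k₀ (2 * lam * t, x))).im := by
      rw [hPtw, integral_add hA_int hB_int]
    have hfirst : (∫ x, (-2:ℝ) * ((starRingEnd ℂ) (v (t, x))
        * lapC (fun y => v (t, y)) x).im) = 0 := by
      rw [integral_const_mul]
      have h2 : (∫ x, ((starRingEnd ℂ) (v (t, x)) * lapC (fun y => v (t, y)) x).im)
          = (∫ x, (starRingEnd ℂ) (v (t, x)) * lapC (fun y => v (t, y)) x).im := by
        rw [← Complex.imCLM_apply, ← ContinuousLinearMap.integral_comp_comm _ hC_int]
        rfl
      rw [h2, Stmt8Aux.ibp_im_zero hfC2 hK₂ (hv_supp_x t), mul_zero]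
    have hsecond : (∫ x, (-2:ℝ) * ((starRingEnd ℂ) (v (t, x))
        * (Complex.exp (Complex.I * (lam : ℂ) * ((ψ x : ℂ) - (lam : ℂ) * (t : ℂ)))
          * k₀ (2 * lam * t, x))).im)
        ≤ 2 * (∫ x, ‖v (t, x)‖ * ‖k₀ (2 * lam * t, x)‖) := by
      rw [← integral_const_mul]
      refine integral_mono hB_int (hfk_int.const_mul 2) (fun x => ?_)
      have habs : |((starRingEnd ℂ) (v (t, x))
          * (Complex.exp (Complex.I * (lam : ℂ) * ((ψ x : ℂ) - (lam : ℂ) * (t : ℂ)))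
            * k₀ (2 * lam * t, x))).im|
          ≤ ‖v (t, x)‖ * ‖k₀ (2 * lam * t, x)‖ := by
        calc |((starRingEnd ℂ) (v (t, x)) * _).im|
            ≤ ‖(starRingEnd ℂ) (v (t, x))
              * (Complex.exp (Complex.I * (lam : ℂ) * ((ψ x : ℂ) - (lam : ℂ) * (t : ℂ)))
                * k₀ (2 * lam * t, x))‖ := Complex.abs_im_le_norm _
          _ = ‖v (t, x)‖ * (‖Complex.exp (Complex.I * (lam : ℂ)
                * ((ψ x : ℂ) - (lam : ℂ) * (t : ℂ)))‖ * ‖k₀ (2 * lam * t, x)‖) := by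
              simp [map_mul]
          _ = ‖v (t, x)‖ * ‖k₀ (2 * lam * t, x)‖ := by rw [he_norm x, one_mul]
      have hneg := neg_abs_le (((starRingEnd ℂ) (v (t, x))
          * (Complex.exp (Complex.I * (lam : ℂ) * ((ψ x : ℂ) - (lam : ℂ) * (t : ℂ)))
            * k₀ (2 * lam * t, x))).im)
      linarith
    have hholder : (∫ x, ‖v (t, x)‖ * ‖k₀ (2 * lam * t, x)‖)
        ≤ Real.sqrt (E t) * Real.sqrt (g (2 * lam * t)) := by
      have hconj : Real.HolderConjugate 2 2 := Real.HolderConjugate.two_two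
      have hcs1 : HasCompactSupport (fun x : EuclideanSpace ℝ (Fin n) => ‖v (t, x)‖) := by
        refine HasCompactSupport.intro hK₂ (fun x hx => ?_)
        simp [hv_supp_x t x hx]
      have hcs2 : HasCompactSupport
          (fun x : EuclideanSpace ℝ (Fin n) => ‖k₀ (2 * lam * t, x)‖) := by
        refine HasCompactSupport.intro hK₁ (fun x hx => ?_)
        simp [hk₀_supp_x _ x hx]
      have hmf : MemLp (fun x : EuclideanSpace ℝ (Fin n) => ‖v (t, x)‖)
          (ENNReal.ofReal 2) volume := by
        rw [show ENNReal.ofReal 2 = 2 by norm_num]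
        exact (hvtx_cont t).norm.memLp_of_hasCompactSupport hcs1
      have hmk : MemLp (fun x : EuclideanSpace ℝ (Fin n) => ‖k₀ (2 * lam * t, x)‖)
          (ENNReal.ofReal 2) volume := by
        rw [show ENNReal.ofReal 2 = 2 by norm_num]
        exact (hktx_cont _).norm.memLp_of_hasCompactSupport hcs2
      have hH := integral_mul_le_Lp_mul_Lq_of_nonneg hconj
        (Filter.Eventually.of_forall (fun x => norm_nonneg _))
        (Filter.Eventually.of_forall (fun x => norm_nonneg _)) hmf hmk
      have hrw : ∀ w : EuclideanSpace ℝ (Fin n) → ℂ,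
          (∫ x, ‖w x‖ ^ (2:ℝ)) = ∫ x, ‖w x‖ ^ 2 := by
        intro w
        congr 1; funext x
        rw [show (2:ℝ) = ((2:ℕ):ℝ) by norm_num, Real.rpow_natCast]
      calc (∫ x, ‖v (t, x)‖ * ‖k₀ (2 * lam * t, x)‖)
          ≤ (∫ x, ‖v (t, x)‖ ^ (2:ℝ)) ^ (1/(2:ℝ))
            * (∫ x, ‖k₀ (2 * lam * t, x)‖ ^ (2:ℝ)) ^ (1/(2:ℝ)) := hH
        _ = Real.sqrt (E t) * Real.sqrt (g (2 * lam * t)) := by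
            rw [hrw (fun x => v (t, x)), hrw (fun x => k₀ (2 * lam * t, x)),
              ← Real.sqrt_eq_rpow, ← Real.sqrt_eq_rpow, hE_def, hg_def]
    have hgh : Real.sqrt (g (2 * lam * t)) = h (2 * lam * t) := by rw [hh_eq]
    calc (∫ x : EuclideanSpace ℝ (Fin n), P t x)
        = _ + _ := hsplit
      _ ≤ 0 + 2 * (∫ x, ‖v (t, x)‖ * ‖k₀ (2 * lam * t, x)‖) := by
          rw [hfirst]; exact add_le_add le_rfl hsecond
      _ ≤ 0 + 2 * (Real.sqrt (E t) * Real.sqrt (g (2 * lam * t))) := by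
          refine add_le_add le_rfl (mul_le_mul_of_nonneg_left hholder (by norm_num))
      _ = 2 * Real.sqrt (E t) * h (2 * lam * t) := by rw [hgh]; ring
  -- Gronwall-type argument
  set G : ℝ → ℝ := fun u => ∫ s in (0:ℝ)..u, h (2 * lam * s) with hG_def
  have hG_deriv : ∀ u : ℝ, HasDerivAt G (h (2 * lam * u)) u := by
    intro u
    exact ((hh_cont.comp (continuous_const.mul continuous_id)).integral_hasStrictDerivAt
      0 u).hasDerivAt
  have hsqrtE_le : ∀ t ∈ Set.Icc (0:ℝ) T, Real.sqrt (E t) ≤ G t := by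
    intro t ht
    refine le_of_forall_pos_le_add (fun ε hε => ?_)
    have hEpos : ∀ u : ℝ, 0 < E u + ε ^ 2 := fun u =>
      add_pos_of_nonneg_of_pos (hE_nonneg u) (by positivity)
    have hφderiv : ∀ u : ℝ, HasDerivAt (fun w => Real.sqrt (E w + ε ^ 2) - G w)
        ((∫ x : EuclideanSpace ℝ (Fin n), P u x) / (2 * Real.sqrt (E u + ε ^ 2))
          - h (2 * lam * u)) u := by
      intro u
      have h1 : HasDerivAt (fun w => E w + ε ^ 2)
          (∫ x : EuclideanSpace ℝ (Fin n), P u x) u := (hE_deriv u).add_const _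
      have h2 := (Real.hasDerivAt_sqrt (ne_of_gt (hEpos u))).comp u h1
      have h3 : (1 / (2 * Real.sqrt (E u + ε ^ 2)))
            * (∫ x : EuclideanSpace ℝ (Fin n), P u x)
          = (∫ x : EuclideanSpace ℝ (Fin n), P u x) / (2 * Real.sqrt (E u + ε ^ 2)) := by
        ring
      rw [Function.comp_def] at h2
      rw [← h3]
      exact h2.sub (hG_deriv u)
    have hanti : AntitoneOn (fun w => Real.sqrt (E w + ε ^ 2) - G w) (Set.Icc 0 T) := by
      refine antitoneOn_of_deriv_nonpos (convex_Icc 0 T) ?_ ?_ ?_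
      · refine Continuous.continuousOn ?_
        rw [continuous_iff_continuousAt]
        exact fun u => (hφderiv u).continuousAt
      · intro u hu
        exact (hφderiv u).differentiableAt.differentiableWithinAt
      · intro u hu
        rw [interior_Icc] at hu
        rw [(hφderiv u).deriv]
        have hu' : u ∈ Set.Icc (0:ℝ) T := ⟨hu.1.le, hu.2.le⟩
        have hD := hD_le u hu'
        have hsq : Real.sqrt (E u) ≤ Real.sqrt (E u + ε ^ 2) :=
          Real.sqrt_le_sqrt (by nlinarith)
        have hden : 0 < 2 * Real.sqrt (E u + ε ^ 2) := by
          have := Real.sqrt_pos.mpr (hEpos u)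
          linarith
        rw [sub_nonpos, div_le_iff₀ hden]
        calc (∫ x : EuclideanSpace ℝ (Fin n), P u x)
            ≤ 2 * Real.sqrt (E u) * h (2 * lam * u) := hD
          _ ≤ h (2 * lam * u) * (2 * Real.sqrt (E u + ε ^ 2)) := by
              have := hh_nonneg (2 * lam * u)
              nlinarith
    have h0T : (0:ℝ) ∈ Set.Icc (0:ℝ) T := ⟨le_refl 0, hT.le⟩
    have h5 : Real.sqrt (E t + ε ^ 2) - G t ≤ Real.sqrt (E 0 + ε ^ 2) - G 0 :=
      hanti h0T ht ht.1
    have hφ0 : Real.sqrt (E 0 + ε ^ 2) - G 0 = ε := by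
      rw [hE0, zero_add, hG_def]
      simp [Real.sqrt_sq hε.le]
    have hmono : Real.sqrt (E t) ≤ Real.sqrt (E t + ε ^ 2) :=
      Real.sqrt_le_sqrt (by nlinarith)
    linarith
  -- conclude
  intro t ht
  have hL2v : L2norm (fun x => v (t, x)) = Real.sqrt (E t) := by
    rw [Real.sqrt_eq_rpow, hE_def]
    rfl
  have hcomp : G t = (2 * lam)⁻¹ * ∫ s in (0:ℝ)..(2 * lam * t), h s := by
    have h2l : (2 * lam) ≠ 0 := by positivity
    show (∫ s in (0:ℝ)..t, h (2 * lam * s)) = _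
    rw [intervalIntegral.integral_comp_mul_left (a := (0:ℝ)) (b := t) (f := h)
      (c := 2 * lam) h2l]
    simp [smul_eq_mul]
  have hImono : (∫ s in (0:ℝ)..(2 * lam * t), h s) ≤ ∫ s in (0:ℝ)..T₀, h s := by
    have h2lt : 0 ≤ 2 * lam * t := by
      have := ht.1; positivity
    rcases le_total (2 * lam * t) T₀ with hle | hle
    · exact intervalIntegral.integral_mono_interval le_rfl h2lt hle
        (Filter.Eventually.of_forall hh_nonneg) hh_int.intervalIntegrable
    · have hz : (∫ s in T₀..(2 * lam * t), h s) = 0 := by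
        have heq : Set.EqOn h 0 (Set.uIcc T₀ (2 * lam * t)) := by
          intro s hs
          rw [Set.uIcc_of_le hle] at hs
          exact hh_zero s hs.1
        rw [intervalIntegral.integral_congr heq]
        simp
      have hadd := intervalIntegral.integral_add_adjacent_intervals
        (a := (0:ℝ)) (b := T₀) (c := 2 * lam * t)
        hh_int.intervalIntegrable hh_int.intervalIntegrable
      rw [← hadd, hz, add_zero]
  have hfin : Real.sqrt (E t) ≤ (2 * lam)⁻¹ * ∫ s in (0:ℝ)..T₀, h s := by
    calc Real.sqrt (E t) ≤ G t := hsqrtE_le t ht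
      _ = (2 * lam)⁻¹ * ∫ s in (0:ℝ)..(2 * lam * t), h s := hcomp
      _ ≤ (2 * lam)⁻¹ * ∫ s in (0:ℝ)..T₀, h s := by
          refine mul_le_mul_of_nonneg_left hImono ?_
          positivity
  rw [hL2v]
  exact hfin
end
end

section
/- Let n ≥ 1, let v : ℝⁿ → ℂ be twice continuously differentiable and let N : ℝⁿ → ℝⁿ be a continuously differentiable vector field. Then at every point x ∈ ℝⁿ: Re Σₖ ∂ₖv(x) · ∂ₖ( Σⱼ Nⱼ(x) ∂ⱼconj(v)(x) ) = Re Σ_{j,k} ∂ₖNⱼ(x) ∂ₖv(x) ∂ⱼconj(v)(x) + (1/2) div( |∇v|² N )(x) − (1/2) |∇v(x)|² div N(x), where |∇v|² = Σⱼ |∂ⱼv|² and div X = Σⱼ ∂ⱼXⱼ. -/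
open Complex

noncomputable section

/-- Partial derivative in the `j`-th coordinate direction of a real-valued
function on `ℝⁿ`. -/
def pdR {n : ℕ} (j : Fin n) (f : EuclideanSpace ℝ (Fin n) → ℝ)
    (x : EuclideanSpace ℝ (Fin n)) : ℝ :=
  fderiv ℝ f x (EuclideanSpace.single j 1)

lemma sq_norm_eq (z : ℂ) : ‖z‖^2 = (z * (starRingEnd ℂ) z).re := by
  rw [Complex.mul_conj]
  simp [Complex.normSq_eq_norm_sq, ← Complex.ofReal_pow]

/-- Euclidean multiplier identity: for `v : ℝⁿ → ℂ` of class `C²` and a `C¹`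
vector field `N`,
`Re Σₖ ∂ₖv ∂ₖ(Σⱼ Nⱼ ∂ⱼconj v) = Re Σ_{j,k} ∂ₖNⱼ ∂ₖv ∂ⱼconj v
  + (1/2) div(|∇v|² N) − (1/2) |∇v|² div N` at every point. -/
theorem stmt12 {n : ℕ} (hn : 1 ≤ n)
    (v : EuclideanSpace ℝ (Fin n) → ℂ) (hv : ContDiff ℝ 2 v)
    (N : EuclideanSpace ℝ (Fin n) → EuclideanSpace ℝ (Fin n)) (hN : ContDiff ℝ 1 N) :
    ∀ x : EuclideanSpace ℝ (Fin n),
      (∑ k, pd k v x *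
          pd k (fun y => ∑ j, ((N y j : ℝ) : ℂ)
            * pd j (fun z => (starRingEnd ℂ) (v z)) y) x).re
        = (∑ j, ∑ k, ((pdR k (fun y => N y j) x : ℝ) : ℂ) * pd k v x
              * pd j (fun z => (starRingEnd ℂ) (v z)) x).re
          + (1/2 : ℝ) * (∑ j, pdR j (fun y => (∑ l, ‖pd l v y‖ ^ 2) * N y j) x)
          - (1/2 : ℝ) * (∑ j, ‖pd j v x‖ ^ 2) * (∑ j, pdR j (fun y => N y j) x) := by
  intro x
  classical
  have hv1 : Differentiable ℝ v := hv.differentiable two_ne_zero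
  have hvf : ContDiff ℝ 1 fun y => fderiv ℝ v y := hv.fderiv_right (by norm_num)
  have hdf : DifferentiableAt ℝ (fun y => fderiv ℝ v y) x := (hvf.differentiable one_ne_zero) x
  set f'' : EuclideanSpace ℝ (Fin n) →L[ℝ] EuclideanSpace ℝ (Fin n) →L[ℝ] ℂ :=
    fderiv ℝ (fun y => fderiv ℝ v y) x with hf''def
  have hsymm : ∀ w₁ w₂, f'' w₁ w₂ = f'' w₂ w₁ :=
    second_derivative_symmetric (fun y => (hv1 y).hasFDerivAt) hdf.hasFDerivAt
  set cL : ℂ →L[ℝ] ℂ := Complex.conjCLE.toContinuousLinearMap with hcL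
  have hcLapp : ∀ z : ℂ, cL z = (starRingEnd ℂ) z := fun z => rfl
  set D : (j : Fin n) → (EuclideanSpace ℝ (Fin n) →L[ℝ] ℂ) :=
    fun j => (ContinuousLinearMap.apply ℝ ℂ (EuclideanSpace.single j 1)).comp f'' with hD
  have hpd : ∀ j : Fin n, HasFDerivAt (fun y => pd j v y) (D j) x := by
    intro j
    have h : HasFDerivAt ((ContinuousLinearMap.apply ℝ ℂ (EuclideanSpace.single j 1))
        ∘ (fun y => fderiv ℝ v y)) (D j) x :=
      ((ContinuousLinearMap.apply ℝ ℂ (EuclideanSpace.single j 1)).hasFDerivAt).comp x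
        hdf.hasFDerivAt
    exact h
  set a : (j : Fin n) → ℂ := fun j => pd j v x with ha
  set b : (j : Fin n) → (k : Fin n) → ℂ :=
    fun j k => f'' (EuclideanSpace.single k 1) (EuclideanSpace.single j 1) with hb
  have hDapp : ∀ j k : Fin n, D j (EuclideanSpace.single k 1) = b j k := fun j k => rfl
  have hbsymm : ∀ j k, b j k = b k j := fun j k => hsymm _ _
  have hconj : ∀ (j : Fin n) (y), pd j (fun z => (starRingEnd ℂ) (v z)) y
      = (starRingEnd ℂ) (pd j v y) := by
    intro j y
    have h : HasFDerivAt (fun z => (starRingEnd ℂ) (v z)) (cL.comp (fderiv ℝ v y)) y :=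
      cL.hasFDerivAt.comp y (hv1 y).hasFDerivAt
    simp only [pd, h.fderiv, ContinuousLinearMap.comp_apply, hcLapp]
  have hpdc : ∀ j : Fin n, HasFDerivAt (fun y => (starRingEnd ℂ) (pd j v y))
      (cL.comp (D j)) x := fun j => cL.hasFDerivAt.comp x (hpd j)
  set ℓ : (j : Fin n) → (EuclideanSpace ℝ (Fin n) →L[ℝ] ℝ) :=
    fun j => fderiv ℝ (fun y => N y j) x with hℓ
  have hNd : ∀ j : Fin n, DifferentiableAt ℝ (fun y => N y j) x := by
    intro j
    exact ((EuclideanSpace.proj j).differentiable.comp (hN.differentiable one_ne_zero)) x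
  have hNj : ∀ j : Fin n, HasFDerivAt (fun y => N y j) (ℓ j) x :=
    fun j => (hNd j).hasFDerivAt
  have hNjc : ∀ j : Fin n, HasFDerivAt (fun y => ((N y j : ℝ) : ℂ))
      (Complex.ofRealCLM.comp (ℓ j)) x :=
    fun j => Complex.ofRealCLM.hasFDerivAt.comp x (hNj j)
  have hLval : ∀ j k : Fin n, pdR k (fun y => N y j) x = ℓ j (EuclideanSpace.single k 1) :=
    fun j k => rfl
  -- LHS inner derivative
  have hLHS : ∀ k : Fin n,
      pd k (fun y => ∑ j, ((N y j : ℝ) : ℂ) * (starRingEnd ℂ) (pd j v y)) x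
      = ∑ j, (((ℓ j (EuclideanSpace.single k 1) : ℝ) : ℂ) * (starRingEnd ℂ) (a j)
          + ((N x j : ℝ) : ℂ) * (starRingEnd ℂ) (b j k)) := by
    intro k
    have hg : HasFDerivAt
        (fun y => ∑ j, ((N y j : ℝ) : ℂ) * (starRingEnd ℂ) (pd j v y))
        (∑ j, (((N x j : ℝ) : ℂ) • (cL.comp (D j))
          + ((starRingEnd ℂ) (a j)) • (Complex.ofRealCLM.comp (ℓ j)))) x :=
      HasFDerivAt.fun_sum fun j _ => (hNjc j).mul (hpdc j)
    rw [show pd k (fun y => ∑ j, ((N y j : ℝ) : ℂ) * (starRingEnd ℂ) (pd j v y)) x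
        = fderiv ℝ (fun y => ∑ j, ((N y j : ℝ) : ℂ) * (starRingEnd ℂ) (pd j v y)) x
            (EuclideanSpace.single k 1) from rfl, hg.fderiv]
    simp only [ContinuousLinearMap.sum_apply, ContinuousLinearMap.add_apply,
      ContinuousLinearMap.smul_apply, ContinuousLinearMap.comp_apply, hcLapp,
      Complex.ofRealCLM_apply, smul_eq_mul, hDapp]
    exact Finset.sum_congr rfl fun j _ => by ring
  -- derivative of |∇v|²
  set S : ℝ := ∑ l, ‖pd l v x‖^2 with hS
  have hQ : ∀ l : Fin n, HasFDerivAt (fun y => ‖pd l v y‖^2)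
      (Complex.reCLM.comp ((a l) • (cL.comp (D l)) + ((starRingEnd ℂ) (a l)) • (D l))) x := by
    intro l
    have hfun : (fun y => ‖pd l v y‖^2)
        = fun y => Complex.reCLM (pd l v y * (starRingEnd ℂ) (pd l v y)) := by
      funext y; exact sq_norm_eq _
    rw [hfun]
    exact Complex.reCLM.hasFDerivAt.comp x ((hpd l).mul (hpdc l))
  have hRHS2 : ∀ j : Fin n,
      pdR j (fun y => (∑ l, ‖pd l v y‖ ^ 2) * N y j) x
      = S * ℓ j (EuclideanSpace.single j 1)
        + N x j * (∑ l, (a l * (starRingEnd ℂ) (b l j)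
            + (starRingEnd ℂ) (a l) * (b l j)).re) := by
    intro j
    have hprod : HasFDerivAt (fun y => (∑ l, ‖pd l v y‖^2) * N y j)
        (S • (ℓ j) + (N x j) • (∑ l, Complex.reCLM.comp ((a l) • (cL.comp (D l))
          + ((starRingEnd ℂ) (a l)) • (D l)))) x :=
      (HasFDerivAt.fun_sum fun l _ => hQ l).mul (hNj j)
    rw [show pdR j (fun y => (∑ l, ‖pd l v y‖ ^ 2) * N y j) x
        = fderiv ℝ (fun y => (∑ l, ‖pd l v y‖ ^ 2) * N y j) x
            (EuclideanSpace.single j 1) from rfl, hprod.fderiv]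
    simp only [ContinuousLinearMap.add_apply, ContinuousLinearMap.smul_apply,
      ContinuousLinearMap.sum_apply, ContinuousLinearMap.comp_apply, Complex.reCLM_apply,
      hcLapp, hDapp, smul_eq_mul]
  have hav : ∀ k : Fin n, pd k v x = a k := fun k => rfl
  -- rewrite the goal
  simp only [hconj]
  simp only [hLHS, hLval, hRHS2, hav]
  -- pure algebra from here on
  rw [Complex.re_sum, Complex.re_sum]
  have h1 : ∀ k : Fin n,
      (a k * ∑ j, (((ℓ j (EuclideanSpace.single k 1) : ℝ) : ℂ) * (starRingEnd ℂ) (a j)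
          + ((N x j : ℝ) : ℂ) * (starRingEnd ℂ) (b j k))).re
      = (∑ j, (((ℓ j (EuclideanSpace.single k 1) : ℝ) : ℂ) * a k
            * (starRingEnd ℂ) (a j)).re)
        + ∑ j, N x j * (a k * (starRingEnd ℂ) (b j k)).re := by
    intro k
    rw [Finset.mul_sum, Complex.re_sum, ← Finset.sum_add_distrib]
    refine Finset.sum_congr rfl fun j _ => ?_
    rw [mul_add, Complex.add_re]
    congr 1
    · ring_nf
    · rw [show a k * (((N x j : ℝ) : ℂ) * (starRingEnd ℂ) (b j k))
          = ((N x j : ℝ) : ℂ) * (a k * (starRingEnd ℂ) (b j k)) from by ring,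
        Complex.re_ofReal_mul]
  simp only [h1, Complex.re_sum]
  rw [Finset.sum_add_distrib,
    Finset.sum_comm (f := fun k j => (((ℓ j (EuclideanSpace.single k 1) : ℝ) : ℂ) * a k
      * (starRingEnd ℂ) (a j)).re),
    Finset.sum_comm (f := fun k j => N x j * (a k * (starRingEnd ℂ) (b j k)).re)]
  have h2 : ∀ j : Fin n, ∑ k, N x j * (a k * (starRingEnd ℂ) (b j k)).re
      = (1/2 : ℝ) * (N x j * (∑ l, (a l * (starRingEnd ℂ) (b l j)
          + (starRingEnd ℂ) (a l) * (b l j)).re)) := by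
    intro j
    have hC : ∀ l : Fin n, (a l * (starRingEnd ℂ) (b l j)
        + (starRingEnd ℂ) (a l) * (b l j)).re = 2 * (a l * (starRingEnd ℂ) (b j l)).re := by
      intro l
      rw [hbsymm l j]
      rw [show (starRingEnd ℂ) (a l) * (b j l)
          = (starRingEnd ℂ) (a l * (starRingEnd ℂ) (b j l)) from by rw [map_mul]; simp]
      rw [Complex.add_re, Complex.conj_re]
      ring
    rw [Finset.sum_congr rfl fun l _ => hC l, ← Finset.mul_sum, ← Finset.mul_sum]
    ring
  simp only [h2]
  rw [Finset.sum_add_distrib, ← Finset.mul_sum, ← Finset.mul_sum]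
  ring
end
end
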